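/- arXiv:1109.1252 — 6 statements merged into one kernel-verified Lean document; each statement's English description precedes it below -/
import Mathlib

section
/- At each critical point k* of γ (i.e., each point with components in {0, π}), the Hessian of γ is diagonal with entries λ_j cos(k*_j)/γ(k*), and in particular the Hessian is invertible, so every critical point of γ is non-degenerate. -/
open Real

/-- At each critical point `k*` of `γ` (components in `{0, π}`), the Hessian of `γ`
is diagonal with entries `λⱼ cos(k*ⱼ)/γ(k*)`, and it is invertible (nonzero
determinant), i.e. every critical point of `γ` is non-degenerate. -/
theorem gamma_hessian_nondegenerate (d : ℕ) (ω : ℝ) (hω : 0 < ω) (lam : Fin d → ℝ)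
    (hlam : ∀ j, 0 < lam j) (γ : (Fin d → ℝ) → ℝ)
    (hγ : ∀ k, γ k = Real.sqrt (ω ^ 2 + 4 * ∑ j, lam j * Real.sin (k j / 2) ^ 2))
    (k : Fin d → ℝ) (hk : ∀ j, k j = 0 ∨ k j = π) :
    (∀ i j, fderiv ℝ (fun x => fderiv ℝ γ x (Pi.single j 1)) k (Pi.single i 1) =
      if i = j then lam j * Real.cos (k j) / γ k else 0) ∧
    (Matrix.of fun i j : Fin d =>
      fderiv ℝ (fun x => fderiv ℝ γ x (Pi.single j 1)) k (Pi.single i 1)).det ≠ 0 := by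
  classical
  set g : (Fin d → ℝ) → ℝ := fun x => ω ^ 2 + 4 * ∑ j, lam j * Real.sin (x j / 2) ^ 2 with hgdef
  have hγg : ∀ x, γ x = Real.sqrt (g x) := hγ
  have hgpos : ∀ x, 0 < g x := by
    intro x
    have h1 : 0 ≤ ∑ j, lam j * Real.sin (x j / 2) ^ 2 :=
      Finset.sum_nonneg fun j _ => mul_nonneg (hlam j).le (sq_nonneg _)
    have h2 : 0 < ω ^ 2 := pow_pos hω 2
    simp only [hgdef]
    nlinarith
  have hsq : ∀ x, 0 < Real.sqrt (g x) := fun x => Real.sqrt_pos.2 (hgpos x)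
  set G : (Fin d → ℝ) → ((Fin d → ℝ) →L[ℝ] ℝ) := fun x =>
    ∑ j, (2 * lam j * Real.sin (x j)) • (ContinuousLinearMap.proj j : (Fin d → ℝ) →L[ℝ] ℝ)
    with hGdef
  have hgder : ∀ x, HasFDerivAt g (G x) x := by
    intro x
    have hterm : ∀ j : Fin d, HasFDerivAt (fun y : Fin d → ℝ => lam j * Real.sin (y j / 2) ^ 2)
        ((lam j * (Real.sin (x j) / 2)) • (ContinuousLinearMap.proj j : (Fin d → ℝ) →L[ℝ] ℝ)) x := by
      intro j
      have hd : HasDerivAt (fun t : ℝ => t / 2) (1 / 2) (x j) := (hasDerivAt_id _).div_const 2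
      have hs : HasDerivAt (fun t : ℝ => Real.sin (t / 2)) (Real.cos (x j / 2) * (1 / 2)) (x j) :=
        (Real.hasDerivAt_sin _).comp _ hd
      have h1 : HasDerivAt (fun t : ℝ => Real.sin (t / 2) ^ 2) (Real.sin (x j) / 2) (x j) := by
      -- derivative from pow: 2 * sin(t/2)^1 * (cos(t/2)*(1/2))
        have h2 := hs.fun_pow 2
        refine h2.congr_deriv ?_
        have h3 : Real.sin (x j) = 2 * Real.sin (x j / 2) * Real.cos (x j / 2) := by
          rw [← Real.sin_two_mul]; ring_nf
        rw [h3]; ring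
      have hproj : HasFDerivAt (fun y : Fin d → ℝ => y j)
          (ContinuousLinearMap.proj j : (Fin d → ℝ) →L[ℝ] ℝ) x :=
        hasFDerivAt_apply j x
      have h4 := (h1.comp_hasFDerivAt x hproj).const_mul (lam j)
      simpa [smul_smul] using h4
    have hsum := HasFDerivAt.fun_sum (fun j (_ : j ∈ Finset.univ) => hterm j)
    have h5 := (hsum.const_mul (4:ℝ)).const_add (ω ^ 2)
    have hGeq : G x = (4:ℝ) • ∑ j, (lam j * (Real.sin (x j) / 2)) •
        (ContinuousLinearMap.proj j : (Fin d → ℝ) →L[ℝ] ℝ) := by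
      rw [hGdef, Finset.smul_sum]
      refine Finset.sum_congr rfl fun j _ => ?_
      rw [smul_smul]
      ring_nf
    rw [hGeq]
    exact h5
  have hγder : ∀ x, HasFDerivAt γ ((1 / (2 * Real.sqrt (g x))) • G x) x := by
    intro x
    have hsqrt : HasDerivAt Real.sqrt (1 / (2 * Real.sqrt (g x))) (g x) :=
      Real.hasDerivAt_sqrt (hgpos x).ne'
    have h := hsqrt.comp_hasFDerivAt x (hgder x)
    have hfun : γ = fun x => Real.sqrt (g x) := funext hγg
    rw [hfun]
    exact h
  have happly : ∀ (x : Fin d → ℝ) (j : Fin d),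
      (G x) (Pi.single j 1) = 2 * lam j * Real.sin (x j) := by
    intro x j
    rw [hGdef]
    simp only [ContinuousLinearMap.coe_sum', Finset.sum_apply, ContinuousLinearMap.smul_apply,
      ContinuousLinearMap.proj_apply, smul_eq_mul]
    rw [Finset.sum_eq_single j]
    · simp
    · intro b _ hb
      simp [Pi.single_apply, hb]
    · simp
  have hfd1 : ∀ j, (fun x => fderiv ℝ γ x (Pi.single j 1)) =
      fun x => lam j * Real.sin (x j) * (Real.sqrt (g x))⁻¹ := by
    intro j
    funext x
    rw [(hγder x).fderiv]
    simp only [ContinuousLinearMap.smul_apply, smul_eq_mul]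
    rw [happly]
    field_simp
  have hsink : ∀ j, Real.sin (k j) = 0 := by
    intro j
    rcases hk j with h | h <;> simp [h]
  have hcosk : ∀ j, Real.cos (k j) = 1 ∨ Real.cos (k j) = -1 := by
    intro j
    rcases hk j with h | h <;> simp [h]
  have hmain : ∀ i j, fderiv ℝ (fun x => fderiv ℝ γ x (Pi.single j 1)) k (Pi.single i 1) =
      if i = j then lam j * Real.cos (k j) / γ k else 0 := by
    intro i j
    rw [hfd1 j]
    -- derivative of numerator
    have hc : HasFDerivAt (fun x : Fin d → ℝ => lam j * Real.sin (x j))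
        ((lam j * Real.cos (k j)) • (ContinuousLinearMap.proj j : (Fin d → ℝ) →L[ℝ] ℝ)) k := by
      have hproj : HasFDerivAt (fun y : Fin d → ℝ => y j)
          (ContinuousLinearMap.proj j : (Fin d → ℝ) →L[ℝ] ℝ) k :=
        hasFDerivAt_apply j k
      have h1 := ((Real.hasDerivAt_sin (k j)).comp_hasFDerivAt k hproj).const_mul (lam j)
      simpa [smul_smul] using h1
    have hdinv : HasFDerivAt (fun x : Fin d → ℝ => (Real.sqrt (g x))⁻¹)
        ((-(Real.sqrt (g k) ^ 2)⁻¹ : ℝ) • ((1 / (2 * Real.sqrt (g k))) • G k)) k := by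
      have h1 : HasFDerivAt (fun x : Fin d → ℝ => Real.sqrt (g x))
          ((1 / (2 * Real.sqrt (g k))) • G k) k := by
        have := hγder k
        have hfun : γ = fun x => Real.sqrt (g x) := funext hγg
        rwa [hfun] at this
      exact (hasDerivAt_inv (hsq k).ne').comp_hasFDerivAt k h1
    have hF := hc.fun_mul hdinv
    rw [hF.fderiv]
    simp only [ContinuousLinearMap.add_apply, ContinuousLinearMap.smul_apply,
      ContinuousLinearMap.proj_apply, smul_eq_mul, hsink j, mul_zero, zero_mul, zero_add]
    rw [hγg k]
    by_cases hij : i = j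
    · subst hij
      rw [if_pos rfl]
      have h1 : (Pi.single i 1 : Fin d → ℝ) i = 1 := Pi.single_eq_same i 1
      rw [h1]
      field_simp
    · have h0 : (Pi.single i 1 : Fin d → ℝ) j = 0 := Pi.single_eq_of_ne (Ne.symm hij) 1
      rw [h0]
      simp [hij]
  refine ⟨hmain, ?_⟩
  have hmat : (Matrix.of fun i j : Fin d =>
      fderiv ℝ (fun x => fderiv ℝ γ x (Pi.single j 1)) k (Pi.single i 1)) =
      Matrix.diagonal (fun j => lam j * Real.cos (k j) / γ k) := by
    ext i j
    rw [Matrix.of_apply, hmain i j, Matrix.diagonal_apply]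
    by_cases hij : i = j <;> simp [hij]
  rw [hmat, Matrix.det_diagonal]
  rw [Finset.prod_ne_zero_iff]
  intro j _
  have hγk : γ k ≠ 0 := by rw [hγg k]; exact (hsq k).ne'
  have hcos : Real.cos (k j) ≠ 0 := by
    rcases hcosk j with h | h <;> rw [h] <;> norm_num
  exact div_ne_zero (mul_ne_zero (hlam j).ne' hcos) hγk
end

section
/- For d ≥ 2 and γ(k) = sqrt(ω² + 4∑_{j=1}^d λ_j sin²(k_j/2)) with ω, λ_j > 0, at every point k of the torus there exists a multi-index β of order 2 such that ∂^β γ(k) ≠ 0; that is, not all second-order partial derivatives of γ can vanish simultaneously. -/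
open Real

noncomputable def sfun (t : ℝ) : ℝ := Real.sin (t / 2) * Real.cos (t / 2)

lemma hasDerivAt_sin_half (t : ℝ) :
    HasDerivAt (fun t : ℝ => Real.sin (t / 2)) (Real.cos (t / 2) * (1 / 2)) t := by
  have h1 : HasDerivAt (fun t : ℝ => t / 2) (1 / 2) t := (hasDerivAt_id t).div_const 2
  exact (Real.hasDerivAt_sin (t / 2)).comp t h1

lemma hasDerivAt_cos_half (t : ℝ) :
    HasDerivAt (fun t : ℝ => Real.cos (t / 2)) (-Real.sin (t / 2) * (1 / 2)) t := by
  have h1 : HasDerivAt (fun t : ℝ => t / 2) (1 / 2) t := (hasDerivAt_id t).div_const 2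
  exact (Real.hasDerivAt_cos (t / 2)).comp t h1

lemma hasDerivAt_sq_sin_half (t : ℝ) :
    HasDerivAt (fun t : ℝ => Real.sin (t / 2) ^ 2) (sfun t) t := by
  have := (hasDerivAt_sin_half t).fun_pow 2
  refine this.congr_deriv ?_
  simp only [sfun]
  ring

lemma hasDerivAt_sfun (t : ℝ) :
    HasDerivAt sfun ((Real.cos (t / 2) ^ 2 - Real.sin (t / 2) ^ 2) / 2) t := by
  have := (hasDerivAt_sin_half t).fun_mul (hasDerivAt_cos_half t)
  refine this.congr_deriv ?_
  ring

noncomputable def gfun (d : ℕ) (ω : ℝ) (lam : Fin d → ℝ) (x : Fin d → ℝ) : ℝ :=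
  ω ^ 2 + 4 * ∑ j, lam j * Real.sin (x j / 2) ^ 2

noncomputable def Dg (d : ℕ) (lam : Fin d → ℝ) (x : Fin d → ℝ) : (Fin d → ℝ) →L[ℝ] ℝ :=
  ∑ j, (4 * lam j * sfun (x j)) • (ContinuousLinearMap.proj j : (Fin d → ℝ) →L[ℝ] ℝ)

lemma gfun_pos (d : ℕ) (ω : ℝ) (hω : 0 < ω) (lam : Fin d → ℝ) (hlam : ∀ j, 0 < lam j)
    (x : Fin d → ℝ) : 0 < gfun d ω lam x := by
  have h : (0:ℝ) ≤ ∑ j, lam j * Real.sin (x j / 2) ^ 2 :=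
    Finset.sum_nonneg fun j _ => mul_nonneg (hlam j).le (sq_nonneg _)
  have : (0:ℝ) < ω ^ 2 := pow_pos hω 2
  unfold gfun; nlinarith

lemma hasFDerivAt_gfun (d : ℕ) (ω : ℝ) (lam : Fin d → ℝ) (x : Fin d → ℝ) :
    HasFDerivAt (gfun d ω lam) (Dg d lam x) x := by
  have hsum : ∀ j : Fin d, HasFDerivAt
      (fun x : Fin d → ℝ => 4 * lam j * Real.sin (x j / 2) ^ 2)
      ((4 * lam j * sfun (x j)) • (ContinuousLinearMap.proj j : (Fin d → ℝ) →L[ℝ] ℝ)) x := by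
    intro j
    have hproj : HasFDerivAt (fun x : Fin d → ℝ => x j)
        (ContinuousLinearMap.proj j : (Fin d → ℝ) →L[ℝ] ℝ) x :=
      (ContinuousLinearMap.proj j : (Fin d → ℝ) →L[ℝ] ℝ).hasFDerivAt
    have hscal : HasDerivAt (fun t : ℝ => 4 * lam j * Real.sin (t / 2) ^ 2)
        (4 * lam j * sfun (x j)) (x j) := (hasDerivAt_sq_sin_half (x j)).const_mul _
    exact hscal.comp_hasFDerivAt (f := fun x : Fin d → ℝ => x j) x hproj
  have h : HasFDerivAt
      (fun y : Fin d → ℝ => ω ^ 2 + ∑ j, 4 * lam j * Real.sin (y j / 2) ^ 2)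
      (∑ j, (4 * lam j * sfun (x j)) • (ContinuousLinearMap.proj j : (Fin d → ℝ) →L[ℝ] ℝ)) x :=
    (HasFDerivAt.fun_sum fun j _ => hsum j).const_add (ω ^ 2)
  have heq : gfun d ω lam =
      fun y : Fin d → ℝ => ω ^ 2 + ∑ j, 4 * lam j * Real.sin (y j / 2) ^ 2 := by
    funext y
    unfold gfun
    rw [Finset.mul_sum]
    congr 1
    exact Finset.sum_congr rfl fun j _ => by ring
  rw [heq, Dg]
  exact h

/-- For `d ≥ 2`, at every point `k` there is a multi-index of order 2 (i.e. a pair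
`(i, j)`) such that the corresponding second-order partial derivative of `γ` does
not vanish. -/
theorem gamma_second_derivs_not_all_vanish (d : ℕ) (hd : 2 ≤ d) (ω : ℝ) (hω : 0 < ω)
    (lam : Fin d → ℝ) (hlam : ∀ j, 0 < lam j) (γ : (Fin d → ℝ) → ℝ)
    (hγ : ∀ k, γ k = Real.sqrt (ω ^ 2 + 4 * ∑ j, lam j * Real.sin (k j / 2) ^ 2)) :
    ∀ k : Fin d → ℝ, ∃ i j : Fin d,
      fderiv ℝ (fun x => fderiv ℝ γ x (Pi.single j 1)) k (Pi.single i 1) ≠ 0 := by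
  intro k
  classical
  set g := gfun d ω lam with hgdef
  have hγeq : γ = fun x => Real.sqrt (g x) := by
    funext x; rw [hγ x]; rfl
  have hgpos : ∀ x, 0 < g x := gfun_pos d ω hω lam hlam
  have hsq : ∀ x, 0 < Real.sqrt (g x) := fun x => Real.sqrt_pos.mpr (hgpos x)
  have h2s : ∀ x, 2 * Real.sqrt (g x) ≠ 0 := fun x =>
    mul_ne_zero two_ne_zero (hsq x).ne'
  -- derivative of γ
  have hγ' : ∀ x, HasFDerivAt γ ((1 / (2 * Real.sqrt (g x))) • Dg d lam x) x := by
    intro x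
    rw [hγeq]
    exact (hasFDerivAt_gfun d ω lam x).sqrt (hgpos x).ne'
  -- evaluation of Dg at Pi.single j 1
  have hDg : ∀ x (j : Fin d), Dg d lam x (Pi.single j 1) = 4 * lam j * sfun (x j) := by
    intro x j
    simp only [Dg, ContinuousLinearMap.sum_apply, ContinuousLinearMap.smul_apply,
      ContinuousLinearMap.proj_apply, Pi.single_apply, smul_eq_mul]
    rw [Finset.sum_eq_single j]
    · simp
    · intro b _ hb; simp [hb]
    · simp
  -- the first derivative function
  have hfd : ∀ j : Fin d, (fun x => fderiv ℝ γ x (Pi.single j 1)) =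
      fun x => (2 * Real.sqrt (g x))⁻¹ * (4 * lam j * sfun (x j)) := by
    intro j
    funext x
    rw [(hγ' x).fderiv]
    simp [hDg x j, one_div]
  -- derivative of the inverse-sqrt factor
  have hu : ∀ x, HasFDerivAt (fun x => (2 * Real.sqrt (g x))⁻¹)
      ((-(((2 * Real.sqrt (g x)) ^ 2)⁻¹)) •
        ((2:ℝ) • ((1 / (2 * Real.sqrt (g x))) • Dg d lam x))) x := by
    intro x
    have hsqrt : HasFDerivAt (fun x => Real.sqrt (g x))
        ((1 / (2 * Real.sqrt (g x))) • Dg d lam x) x :=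
      (hasFDerivAt_gfun d ω lam x).sqrt (hgpos x).ne'
    have h2 : HasFDerivAt (fun x => 2 * Real.sqrt (g x))
        ((2:ℝ) • ((1 / (2 * Real.sqrt (g x))) • Dg d lam x)) x := hsqrt.const_mul 2
    exact (hasDerivAt_inv (h2s x)).comp_hasFDerivAt x h2
  -- derivative of the second factor
  have hv : ∀ x (j : Fin d), HasFDerivAt (fun x : Fin d → ℝ => 4 * lam j * sfun (x j))
      ((4 * lam j * ((Real.cos (x j / 2) ^ 2 - Real.sin (x j / 2) ^ 2) / 2)) •
        (ContinuousLinearMap.proj j : (Fin d → ℝ) →L[ℝ] ℝ)) x := by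
    intro x j
    have hproj : HasFDerivAt (fun x : Fin d → ℝ => x j)
        (ContinuousLinearMap.proj j : (Fin d → ℝ) →L[ℝ] ℝ) x :=
      (ContinuousLinearMap.proj j : (Fin d → ℝ) →L[ℝ] ℝ).hasFDerivAt
    exact ((hasDerivAt_sfun (x j)).const_mul (4 * lam j)).comp_hasFDerivAt (f := fun x : Fin d → ℝ => x j) x hproj
  -- second derivative value
  have key : ∀ i j : Fin d,
      fderiv ℝ (fun x => fderiv ℝ γ x (Pi.single j 1)) k (Pi.single i 1) =
        (2 * Real.sqrt (g k))⁻¹ *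
          ((4 * lam j * ((Real.cos (k j / 2) ^ 2 - Real.sin (k j / 2) ^ 2) / 2)) *
            (if j = i then (1:ℝ) else 0)) +
        (4 * lam j * sfun (k j)) *
          ((-(((2 * Real.sqrt (g k)) ^ 2)⁻¹)) *
            (2 * ((1 / (2 * Real.sqrt (g k))) * (4 * lam i * sfun (k i))))) := by
    intro i j
    rw [hfd j]
    have hmul := (hu k).fun_mul (hv k j)
    rw [hmul.fderiv]
    simp only [ContinuousLinearMap.add_apply, ContinuousLinearMap.smul_apply,
      ContinuousLinearMap.proj_apply, smul_eq_mul, Pi.single_apply, hDg k i]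
  by_cases hcase : ∃ i, sfun (k i) = 0
  · obtain ⟨i, hi⟩ := hcase
    refine ⟨i, i, ?_⟩
    rw [key i i]
    have hc : Real.cos (k i / 2) ^ 2 - Real.sin (k i / 2) ^ 2 ≠ 0 := by
      have hpy := Real.sin_sq_add_cos_sq (k i / 2)
      rcases mul_eq_zero.mp hi with h | h <;> nlinarith
    have h1 : (2 * Real.sqrt (g k))⁻¹ ≠ 0 := inv_ne_zero (h2s k)
    simp only [hi, eq_self_iff_true, if_true, mul_zero, zero_mul, mul_one, add_zero]
    apply mul_ne_zero h1
    apply mul_ne_zero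
    · exact mul_ne_zero (by norm_num) (hlam i).ne'
    · exact div_ne_zero hc two_ne_zero
  · push_neg at hcase
    have h0d : 0 < d := by omega
    have h1d : 1 < d := by omega
    set i0 : Fin d := ⟨0, h0d⟩
    set i1 : Fin d := ⟨1, h1d⟩
    have hne : i1 ≠ i0 := by
      intro h
      have := congrArg Fin.val h
      simp [i0, i1] at this
    refine ⟨i0, i1, ?_⟩
    rw [key i0 i1, if_neg hne]
    simp only [mul_zero, zero_add]
    refine mul_ne_zero (mul_ne_zero (mul_ne_zero (by norm_num) (hlam i1).ne') (hcase i1)) ?_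
    refine mul_ne_zero (neg_ne_zero.mpr (inv_ne_zero (pow_ne_zero 2 (h2s k)))) ?_
    refine mul_ne_zero two_ne_zero ?_
    exact mul_ne_zero (one_div_ne_zero (h2s k))
      (mul_ne_zero (mul_ne_zero (by norm_num) (hlam i0).ne') (hcase i0))
end

section
/- In one dimension, the second and third derivatives of γ(k) = sqrt(ω² + 4λ sin²(k/2)) cannot vanish simultaneously: for every k ∈ ℝ, γ''(k) ≠ 0 or γ'''(k) ≠ 0. -/
open Real

/-- In one dimension the second and third derivatives of
`γ(k) = sqrt(ω² + 4λ sin²(k/2))` cannot vanish simultaneously. -/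
theorem gamma_one_dim_derivs (ω lam : ℝ) (hω : 0 < ω) (hlam : 0 < lam)
    (γ : ℝ → ℝ)
    (hγ : ∀ k, γ k = Real.sqrt (ω ^ 2 + 4 * lam * Real.sin (k / 2) ^ 2)) :
    ∀ k : ℝ, iteratedDeriv 2 γ k ≠ 0 ∨ iteratedDeriv 3 γ k ≠ 0 := by
  have hγfun : γ = fun k => Real.sqrt (ω ^ 2 + 4 * lam * Real.sin (k / 2) ^ 2) :=
    funext hγ
  have hfpos : ∀ k : ℝ, 0 < ω ^ 2 + 4 * lam * Real.sin (k / 2) ^ 2 := by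
    intro k
    have := sq_nonneg (Real.sin (k / 2))
    nlinarith
  have hγpos : ∀ k, 0 < γ k := by
    intro k; rw [hγ k]; exact Real.sqrt_pos.mpr (hfpos k)
  -- smoothness of γ
  have hfsm : ContDiff ℝ ((⊤ : ℕ∞) : WithTop ℕ∞) (fun k : ℝ => ω ^ 2 + 4 * lam * Real.sin (k / 2) ^ 2) := by
    exact contDiff_const.add (contDiff_const.mul
      ((Real.contDiff_sin.comp (contDiff_id.div_const 2)).pow 2))
  have hsm : ContDiff ℝ ((⊤ : ℕ∞) : WithTop ℕ∞) γ := by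
    rw [hγfun, contDiff_iff_contDiffAt]
    intro x
    exact (hfsm.contDiffAt).sqrt (ne_of_gt (hfpos x))
  have Dγ : Differentiable ℝ γ := hsm.differentiable (by simp)
  have Dγ1 : Differentiable ℝ (deriv γ) := by
    have h := hsm.iterate_deriv 1
    simp only [Function.iterate_one] at h
    exact h.differentiable (by simp)
  have Dγ2 : Differentiable ℝ (deriv (deriv γ)) := by
    have h := hsm.iterate_deriv 2
    simp only [Function.iterate_succ, Function.iterate_zero, Function.comp_apply,
      Function.id_def, Function.comp_def] at h
    exact h.differentiable (by simp)
  -- γ² = f as functions, with f rewritten via cos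
  have hsq : (fun x => γ x * γ x) = fun x => ω ^ 2 + 2 * lam - 2 * lam * Real.cos x := by
    funext x
    rw [hγ x, Real.mul_self_sqrt (le_of_lt (hfpos x))]
    have h1 := Real.cos_sq (x / 2)
    have h2 := Real.sin_sq_add_cos_sq (x / 2)
    have h3 : 2 * (x / 2) = x := by ring
    rw [h3] at h1
    nlinarith
  -- first derivative identity : γ γ' = λ sin
  have key1 : ∀ x : ℝ, γ x * deriv γ x = lam * Real.sin x := by
    intro x
    have hL : HasDerivAt (fun x => γ x * γ x)
        (deriv γ x * γ x + γ x * deriv γ x) x :=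
      ((Dγ x).hasDerivAt).mul ((Dγ x).hasDerivAt)
    rw [hsq] at hL
    have hR : HasDerivAt (fun x => ω ^ 2 + 2 * lam - 2 * lam * Real.cos x)
        (0 - 2 * lam * (-Real.sin x)) x :=
      (hasDerivAt_const x (ω ^ 2 + 2 * lam)).sub ((Real.hasDerivAt_cos x).const_mul (2 * lam))
    have := hL.unique hR
    nlinarith [this]
  -- second derivative identity : γ'² + γ γ'' = λ cos
  have key2 : ∀ x : ℝ, deriv γ x * deriv γ x + γ x * deriv (deriv γ) x
      = lam * Real.cos x := by
    intro x
    have hfun : (fun x => γ x * deriv γ x) = fun x => lam * Real.sin x := funext key1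
    have hL : HasDerivAt (fun x => γ x * deriv γ x)
        (deriv γ x * deriv γ x + γ x * deriv (deriv γ) x) x :=
      ((Dγ x).hasDerivAt).mul ((Dγ1 x).hasDerivAt)
    rw [hfun] at hL
    have hR : HasDerivAt (fun x => lam * Real.sin x) (lam * Real.cos x) x :=
      (Real.hasDerivAt_sin x).const_mul lam
    exact hL.unique hR
  -- third derivative identity
  have key3 : ∀ x : ℝ, deriv (deriv γ) x * deriv γ x + deriv γ x * deriv (deriv γ) x
      + (deriv γ x * deriv (deriv γ) x + γ x * deriv (deriv (deriv γ)) x)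
      = lam * (-Real.sin x) := by
    intro x
    have hfun : (fun x => deriv γ x * deriv γ x + γ x * deriv (deriv γ) x)
        = fun x => lam * Real.cos x := funext key2
    have hL : HasDerivAt (fun x => deriv γ x * deriv γ x + γ x * deriv (deriv γ) x)
        (deriv (deriv γ) x * deriv γ x + deriv γ x * deriv (deriv γ) x
          + (deriv γ x * deriv (deriv γ) x + γ x * deriv (deriv (deriv γ)) x)) x :=
      (((Dγ1 x).hasDerivAt).mul ((Dγ1 x).hasDerivAt)).add
        (((Dγ x).hasDerivAt).mul ((Dγ2 x).hasDerivAt))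
    rw [hfun] at hL
    have hR : HasDerivAt (fun x => lam * Real.cos x) (lam * (-Real.sin x)) x :=
      (Real.hasDerivAt_cos x).const_mul lam
    exact hL.unique hR
  -- conclude
  intro k
  by_contra h
  push_neg at h
  obtain ⟨h2, h3⟩ := h
  have e2 : iteratedDeriv 2 γ k = deriv (deriv γ) k := by
    simp [iteratedDeriv_succ, iteratedDeriv_one]
  have e3 : iteratedDeriv 3 γ k = deriv (deriv (deriv γ)) k := by
    simp [iteratedDeriv_succ, iteratedDeriv_one]
  rw [e2] at h2
  rw [e3] at h3
  have k1 := key1 k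
  have k2 := key2 k
  have k3 := key3 k
  rw [h2, h3] at k3
  rw [h2] at k2
  -- from k3 : 0 = -λ sin k, so sin k = 0
  have hsin : Real.sin k = 0 := by nlinarith [k3]
  have hcos : Real.cos k = 1 ∨ Real.cos k = -1 := by
    have := Real.sin_sq_add_cos_sq k
    rw [hsin] at this
    have : Real.cos k ^ 2 = 1 := by nlinarith
    have h4 : (Real.cos k - 1) * (Real.cos k + 1) = 0 := by nlinarith
    rcases mul_eq_zero.mp h4 with h | h
    · exact Or.inl (by linarith)
    · exact Or.inr (by linarith)
  rcases hcos with h | h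
  · -- cos k = 1 : then λ = γ'² (k2), and γ γ' = 0 (k1) so γ' = 0, contradiction
    rw [h] at k2
    rw [hsin] at k1
    have hg' : deriv γ k = 0 := by
      have := hγpos k
      nlinarith [k1]
    rw [hg'] at k2
    nlinarith [k2]
  · rw [h] at k2
    nlinarith [k2, sq_nonneg (deriv γ k)]
end

section
/- Each T_t = (U+V) F^{-1} M_t F (U*−V*) is symplectic: Im⟨T_t f, T_t g⟩ = Im⟨f, g⟩ for all f, g ∈ ℓ²(ℤ^d). -/
open scoped ComplexInnerProductSpace

/-- Each `T_t = (U+V) F⁻¹ M_t F (U*−V*)` is symplectic: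
`Im⟪T_t f, T_t g⟫ = Im⟪f, g⟫` for all `f, g`.  Here `U`, `V` are the Bogoliubov
transformations (with `U` complex linear and `V` anti-linear) satisfying
`U*U − V*V = 1 = UU* − VV*`, `V*U − U*V = 0 = VU* − UV*`, `U*` and `V*` are the
adjoints of `U` and of the anti-linear map `V`, and `M_t`, multiplication by
`e^{2iγt}`, is unitary. -/
theorem harmonic_T_symplectic {H K : Type*}
    [NormedAddCommGroup H] [InnerProductSpace ℂ H]
    [NormedAddCommGroup K] [InnerProductSpace ℂ K]
    (F : H ≃ₗᵢ[ℂ] K)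
    (U V Ustar Vstar : H →ₗ[ℝ] H)
    (hUc : ∀ (c : ℂ) x, U (c • x) = c • U x)
    (hVc : ∀ (c : ℂ) x, V (c • x) = (starRingEnd ℂ c) • V x)
    (hUstar : ∀ x y, ⟪Ustar x, y⟫ = ⟪x, U y⟫)
    (hVstar : ∀ x y, ⟪Vstar x, y⟫ = ⟪V y, x⟫)
    (hrel1 : ∀ x, Ustar (U x) - Vstar (V x) = x)
    (hrel2 : ∀ x, U (Ustar x) - V (Vstar x) = x)
    (hrel3 : ∀ x, Vstar (U x) - Ustar (V x) = 0)
    (hrel4 : ∀ x, V (Ustar x) - U (Vstar x) = 0)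
    (Mt : ℝ → K →ₗ[ℂ] K)
    (hMunitary : ∀ t x y, ⟪Mt t x, Mt t y⟫ = ⟪x, y⟫)
    (T : ℝ → H → H)
    (hT : ∀ t f, T t f = (U + V) (F.symm (Mt t (F ((Ustar - Vstar) f))))) :
    ∀ (t : ℝ) (f g : H), (⟪T t f, T t g⟫).im = (⟪f, g⟫).im := by
  intro t f g
  have conjsym : ∀ (a b : H), (⟪a, b⟫ : ℂ).im = -(⟪b, a⟫ : ℂ).im := by
    intro a b
    rw [← inner_conj_symm a b, Complex.conj_im]
  have hA : ∀ x y : H, (⟪(U + V) x, (U + V) y⟫ : ℂ).im = (⟪x, y⟫ : ℂ).im := by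
    intro x y
    have h0 : Ustar (V x) - Vstar (U x) = 0 :=
      sub_eq_zero.mpr (sub_eq_zero.mp (hrel3 x)).symm
    have expand : (⟪(U + V) x, (U + V) y⟫ : ℂ)
        = ⟪U x, U y⟫ + ⟪U x, V y⟫ + (⟪V x, U y⟫ + ⟪V x, V y⟫) := by
      simp [LinearMap.add_apply, inner_add_left, inner_add_right]
      ring
    have key : (⟪x, y⟫ : ℂ).im
        = (⟪Ustar (U x) - Vstar (V x), y⟫ : ℂ).im
          + (⟪Ustar (V x) - Vstar (U x), y⟫ : ℂ).im := by
      rw [hrel1 x, h0, inner_zero_left]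
      simp
    have i1 : (⟪U x, U y⟫ : ℂ).im = (⟪Ustar (U x), y⟫ : ℂ).im := by
      rw [hUstar (U x) y]
    have i2 : (⟪V x, U y⟫ : ℂ).im = (⟪Ustar (V x), y⟫ : ℂ).im := by
      rw [hUstar (V x) y]
    have i3 : (⟪U x, V y⟫ : ℂ).im = -(⟪Vstar (U x), y⟫ : ℂ).im := by
      rw [conjsym, hVstar (U x) y]
    have i4 : (⟪V x, V y⟫ : ℂ).im = -(⟪Vstar (V x), y⟫ : ℂ).im := by
      rw [conjsym, hVstar (V x) y]
    rw [expand]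
    simp only [Complex.add_im]
    rw [key, inner_sub_left, inner_sub_left]
    simp only [Complex.sub_im]
    rw [i1, i2, i3, i4]
    ring
  have hB : ∀ x y : H,
      (⟪(Ustar - Vstar) x, (Ustar - Vstar) y⟫ : ℂ).im = (⟪x, y⟫ : ℂ).im := by
    intro x y
    have h0 : V (Ustar y) - U (Vstar y) = 0 := hrel4 y
    have expand : (⟪(Ustar - Vstar) x, (Ustar - Vstar) y⟫ : ℂ)
        = ⟪Ustar x, Ustar y⟫ - ⟪Ustar x, Vstar y⟫
          - (⟪Vstar x, Ustar y⟫ - ⟪Vstar x, Vstar y⟫) := by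
      simp [LinearMap.sub_apply, inner_sub_left, inner_sub_right]
      ring
    have key : (⟪x, y⟫ : ℂ).im
        = (⟪x, U (Ustar y) - V (Vstar y)⟫ : ℂ).im
          + (⟪x, V (Ustar y) - U (Vstar y)⟫ : ℂ).im := by
      rw [hrel2 y, h0, inner_zero_right]
      simp
    have i1 : (⟪Ustar x, Ustar y⟫ : ℂ).im = (⟪x, U (Ustar y)⟫ : ℂ).im := by
      rw [hUstar x (Ustar y)]
    have i2 : (⟪Ustar x, Vstar y⟫ : ℂ).im = (⟪x, U (Vstar y)⟫ : ℂ).im := by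
      rw [hUstar x (Vstar y)]
    have i3 : (⟪Vstar x, Ustar y⟫ : ℂ).im = -(⟪x, V (Ustar y)⟫ : ℂ).im := by
      rw [hVstar x (Ustar y), conjsym]
    have i4 : (⟪Vstar x, Vstar y⟫ : ℂ).im = -(⟪x, V (Vstar y)⟫ : ℂ).im := by
      rw [hVstar x (Vstar y), conjsym]
    rw [expand]
    simp only [Complex.sub_im]
    rw [key, inner_sub_right, inner_sub_right]
    simp only [Complex.sub_im, Complex.add_im]
    rw [i1, i2, i3, i4]
    ring
  rw [hT, hT, hA]
  rw [F.symm.inner_map_map, hMunitary, F.inner_map_map]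
  exact hB f g
end

section
/- (Van der Corput with amplitude) Let φ : ℝ → ℝ be C^k on [a,b] with |φ^{(k)}(x)| ≥ α > 0 for all x ∈ [a,b], where k ≥ 2. Then for every C¹ function η on [a,b], |∫_a^b e^{iφ(x)} η(x) dx| ≤ (c_k / α^{1/k}) ( |η(b)| + ∫_a^b |η'(x)| dx ), where c_k = 5·2^{k−1} − 2. -/
open MeasureTheory intervalIntegral Set

namespace VdC

lemma signConst {a b α : ℝ} {h : ℝ → ℝ} (hα : 0 < α)
    (hc : ContinuousOn h (Icc a b)) (hl : ∀ x ∈ Icc a b, α ≤ |h x|) :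
    (∀ x ∈ Icc a b, α ≤ h x) ∨ (∀ x ∈ Icc a b, h x ≤ -α) := by
  by_contra hcon
  push_neg at hcon
  obtain ⟨⟨x₁, hx₁, hx₁'⟩, ⟨x₂, hx₂, hx₂'⟩⟩ := hcon
  have h1 : h x₁ ≤ -α := by
    rcases abs_cases (h x₁) with ⟨he, _⟩ | ⟨he, _⟩
    · linarith [hl x₁ hx₁]
    · linarith [hl x₁ hx₁]
  have h2 : α ≤ h x₂ := by
    rcases abs_cases (h x₂) with ⟨he, _⟩ | ⟨he, _⟩
    · linarith [hl x₂ hx₂]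
    · linarith [hl x₂ hx₂]
  have hsub : uIcc x₁ x₂ ⊆ Icc a b := Set.ordConnected_Icc.uIcc_subset hx₁ hx₂
  have h0 : (0 : ℝ) ∈ uIcc (h x₁) (h x₂) :=
    Set.mem_uIcc.mpr (Or.inl ⟨by linarith, by linarith⟩)
  obtain ⟨z, hz, hz0⟩ := intermediate_value_uIcc (hc.mono hsub) h0
  have := hl z (hsub hz)
  rw [hz0] at this
  simp at this
  linarith

lemma mvt_lb {a b C : ℝ} {g h : ℝ → ℝ}
    (hd : ∀ x ∈ Icc a b, HasDerivWithinAt g (h x) (Icc a b) x)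
    (hC : ∀ x ∈ Icc a b, C ≤ h x) :
    ∀ x ∈ Icc a b, ∀ y ∈ Icc a b, x ≤ y → C * (y - x) ≤ g y - g x := by
  intro x hx y hy hxy
  have hcont : ContinuousOn g (Icc a b) := fun t ht => (hd t ht).continuousWithinAt
  have hdiff : DifferentiableOn ℝ g (interior (Icc a b)) := by
    intro t ht
    rw [interior_Icc] at ht
    exact (((hd t (Ioo_subset_Icc_self ht)).hasDerivAt
      (Icc_mem_nhds ht.1 ht.2)).differentiableAt).differentiableWithinAt
  refine (convex_Icc a b).mul_sub_le_image_sub_of_le_deriv hcont hdiff ?_ x hx y hy hxy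
  intro t ht
  rw [interior_Icc] at ht
  have hda := (hd t (Ioo_subset_Icc_self ht)).hasDerivAt (Icc_mem_nhds ht.1 ht.2)
  rw [hda.deriv]
  exact hC t (Ioo_subset_Icc_self ht)

lemma lowerBoundAux {a b α : ℝ} {g h : ℝ → ℝ} (hab : a ≤ b) (hα : 0 < α)
    (hd : ∀ x ∈ Icc a b, HasDerivWithinAt g (h x) (Icc a b) x)
    (hl : ∀ x ∈ Icc a b, α ≤ h x) :
    ∃ c ∈ Icc a b, ∀ x ∈ Icc a b, ∀ δ : ℝ, 0 ≤ δ → δ ≤ |x - c| → α * δ ≤ |g x| := by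
  have key := mvt_lb hd hl
  have hcont : ContinuousOn g (Icc a b) := fun t ht => (hd t ht).continuousWithinAt
  have ha : a ∈ Icc a b := left_mem_Icc.mpr hab
  have hb : b ∈ Icc a b := right_mem_Icc.mpr hab
  by_cases h0a : 0 ≤ g a
  · refine ⟨a, ha, fun x hx δ hδ hxd => ?_⟩
    have hax : a ≤ x := hx.1
    rw [abs_of_nonneg (by linarith)] at hxd
    have hk := key a ha x hx hax
    have : α * δ ≤ g x := by nlinarith
    exact this.trans (le_abs_self _)
  · by_cases h0b : g b ≤ 0
    · refine ⟨b, hb, fun x hx δ hδ hxd => ?_⟩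
      have hxb : x ≤ b := hx.2
      rw [abs_of_nonpos (by linarith), neg_sub] at hxd
      have hk := key x hx b hb hxb
      have : α * δ ≤ -g x := by nlinarith
      exact this.trans (neg_le_abs _)
    · have hga : g a < 0 := not_le.mp h0a
      have hgb : 0 < g b := not_le.mp h0b
      obtain ⟨c, hc, hc0⟩ := intermediate_value_Icc hab hcont ⟨hga.le, hgb.le⟩
      refine ⟨c, hc, fun x hx δ hδ hxd => ?_⟩
      rcases le_total x c with hxc | hcx
      · rw [abs_of_nonpos (by linarith), neg_sub] at hxd
        have hk := key x hx c hc hxc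
        rw [hc0] at hk
        have : α * δ ≤ -g x := by nlinarith
        exact this.trans (neg_le_abs _)
      · rw [abs_of_nonneg (by linarith)] at hxd
        have hk := key c hc x hx hcx
        rw [hc0] at hk
        have : α * δ ≤ g x := by nlinarith
        exact this.trans (le_abs_self _)

lemma lowerBound {a b α : ℝ} {g h : ℝ → ℝ} (hab : a ≤ b) (hα : 0 < α)
    (hd : ∀ x ∈ Icc a b, HasDerivWithinAt g (h x) (Icc a b) x)
    (hch : ContinuousOn h (Icc a b))
    (hl : ∀ x ∈ Icc a b, α ≤ |h x|) :
    ∃ c ∈ Icc a b, ∀ x ∈ Icc a b, ∀ δ : ℝ, 0 ≤ δ → δ ≤ |x - c| → α * δ ≤ |g x| := by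
  rcases signConst hα hch hl with hpos | hneg
  · exact lowerBoundAux hab hα hd hpos
  · obtain ⟨c, hc, H⟩ := lowerBoundAux (g := fun y => -g y) (h := fun y => -h y) hab hα
      (fun x hx => (hd x hx).neg) (fun x hx => by simpa using neg_le_neg (hneg x hx))
    exact ⟨c, hc, fun x hx δ h1 h2 => by simpa [abs_neg] using H x hx δ h1 h2⟩

end VdC

namespace VdC2

variable {a b δ : ℝ} {φ g h : ℝ → ℝ}

lemma L1 (hab : a ≤ b) (hδ : 0 < δ)
    (hg : ∀ x ∈ Icc a b, HasDerivWithinAt φ (g x) (Icc a b) x)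
    (hh : ∀ x ∈ Icc a b, HasDerivWithinAt g (h x) (Icc a b) x)
    (hhc : ContinuousOn h (Icc a b))
    (hgl : ∀ x ∈ Icc a b, δ ≤ |g x|)
    (hsign : (∀ x ∈ Icc a b, 0 ≤ h x) ∨ (∀ x ∈ Icc a b, h x ≤ 0)) :
    ‖∫ x in a..b, Complex.exp (Complex.I * (φ x : ℂ))‖ ≤ 3 / δ := by
  set e : ℝ → ℂ := fun x => Complex.exp (Complex.I * (φ x : ℂ)) with he_def
  set ψ : ℝ → ℝ := fun x => h x / g x ^ 2 with hψ_def
  have hgc : ContinuousOn g (Icc a b) := fun t ht => (hh t ht).continuousWithinAt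
  have hφc : ContinuousOn φ (Icc a b) := fun t ht => (hg t ht).continuousWithinAt
  have hgne : ∀ x ∈ Icc a b, g x ≠ 0 := by
    intro x hx h0
    have := hgl x hx
    rw [h0] at this; simp at this; linarith
  have hIgne : ∀ x ∈ Icc a b, Complex.I * (g x : ℂ) ≠ 0 := by
    intro x hx
    simp [Complex.I_ne_zero, Complex.ofReal_eq_zero, hgne x hx]
  have hec : ContinuousOn e (Icc a b) :=
    Complex.continuous_exp.comp_continuousOn
      (continuousOn_const.mul (Complex.continuous_ofReal.comp_continuousOn hφc))
  have hee : ∀ x, ‖e x‖ = 1 := by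
    intro x
    simp [he_def, Complex.norm_exp]
  have hψc : ContinuousOn ψ (Icc a b) :=
    hhc.div (hgc.pow 2) (fun x hx => pow_ne_zero 2 (hgne x hx))
  set F : ℝ → ℂ := fun x => e x * (Complex.I * (g x : ℂ))⁻¹ with hF_def
  have hFc : ContinuousOn F (Icc a b) :=
    hec.mul ((continuousOn_const.mul
      (Complex.continuous_ofReal.comp_continuousOn hgc)).inv₀ (fun x hx => hIgne x hx))
  -- derivative of F at interior points
  have hFd : ∀ x ∈ Ioo a b,
      HasDerivAt F (e x + Complex.I * e x * (ψ x : ℂ)) x := by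
    intro x hx
    have hxI : x ∈ Icc a b := Ioo_subset_Icc_self hx
    have hmem : Icc a b ∈ nhds x := Icc_mem_nhds hx.1 hx.2
    have hφx : HasDerivAt φ (g x) x := (hg x hxI).hasDerivAt hmem
    have hgx : HasDerivAt g (h x) x := (hh x hxI).hasDerivAt hmem
    have h1 : HasDerivAt (fun y => Complex.I * (φ y : ℂ)) (Complex.I * (g x : ℂ)) x :=
      (hφx.ofReal_comp).const_mul Complex.I
    have he1 : HasDerivAt e (Complex.exp (Complex.I * (φ x : ℂ)) * (Complex.I * (g x : ℂ))) x :=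
      h1.cexp
    have h2 : HasDerivAt (fun y => Complex.I * (g y : ℂ)) (Complex.I * (h x : ℂ)) x :=
      (hgx.ofReal_comp).const_mul Complex.I
    have hv := (hasDerivAt_inv (hIgne x hxI)).comp x h2
    have hF' := he1.mul hv
    convert hF' using 1
    · rfl
    · rfl
    have hgx0 : (g x : ℂ) ≠ 0 := Complex.ofReal_ne_zero.mpr (hgne x hxI)
    have hI2 : (Complex.I : ℂ) ^ 2 = -1 := Complex.I_sq
    have hψx : ((ψ x : ℝ) : ℂ) = (h x : ℂ) / (g x : ℂ) ^ 2 := by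
      simp [hψ_def]
    rw [hψx]
    simp only [Function.comp_apply]
    field_simp [he_def]
    ring_nf
    simp only [he_def, hI2]
    ring
  -- FTC for F
  have int_e : IntervalIntegrable e volume a b := by
    apply ContinuousOn.intervalIntegrable
    rwa [uIcc_of_le hab]
  have int_g2 : IntervalIntegrable (fun x => Complex.I * e x * (ψ x : ℂ)) volume a b := by
    apply ContinuousOn.intervalIntegrable
    rw [uIcc_of_le hab]
    exact (continuousOn_const.mul hec).mul (Complex.continuous_ofReal.comp_continuousOn hψc)
  have ftcF : ∫ x in a..b, (e x + Complex.I * e x * (ψ x : ℂ)) = F b - F a := by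
    apply integral_eq_sub_of_hasDeriv_right_of_le hab hFc
    · intro x hx
      exact ((hFd x hx).hasDerivWithinAt)
    · exact int_e.add int_g2
  -- FTC for -(g)⁻¹
  have ftcH : ∫ x in a..b, ψ x = (g a)⁻¹ - (g b)⁻¹ := by
    have : ∫ x in a..b, ψ x = (fun y => -(g y)⁻¹) b - (fun y => -(g y)⁻¹) a := by
      apply integral_eq_sub_of_hasDeriv_right_of_le hab
      · exact (hgc.inv₀ (fun x hx => hgne x hx)).neg
      · intro x hx
        have hxI : x ∈ Icc a b := Ioo_subset_Icc_self hx
        have hmem : Icc a b ∈ nhds x := Icc_mem_nhds hx.1 hx.2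
        have hgx : HasDerivAt g (h x) x := (hh x hxI).hasDerivAt hmem
        have := (hgx.inv (hgne x hxI)).neg
        have heq : -(-(h x) / g x ^ 2) = ψ x := by rw [neg_div, neg_neg]
        rw [heq] at this
        exact this.hasDerivWithinAt
      · exact ContinuousOn.intervalIntegrable (by rw [uIcc_of_le hab]; exact hψc)
    rw [this]; ring
  -- rearrangement
  have hsplit : ∫ x in a..b, e x
      = F b - F a - ∫ x in a..b, Complex.I * e x * (ψ x : ℂ) := by
    rw [integral_add int_e int_g2] at ftcF
    exact eq_sub_of_add_eq ftcF
  have ha : a ∈ Icc a b := left_mem_Icc.mpr hab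
  have hb : b ∈ Icc a b := right_mem_Icc.mpr hab
  have hFnorm : ∀ x ∈ Icc a b, ‖F x‖ ≤ δ⁻¹ := by
    intro x hx
    have : ‖F x‖ = |g x|⁻¹ := by
      simp [hF_def, he_def, map_mul, Complex.norm_exp]
    rw [this]
    exact inv_anti₀ hδ (hgl x hx)
  have habs : ∫ x in a..b, |ψ x| = |(g a)⁻¹ - (g b)⁻¹| := by
    rcases hsign with hp | hn
    · have h1 : ∫ x in a..b, |ψ x| = ∫ x in a..b, ψ x := by
        apply integral_congr
        intro x hx
        rw [uIcc_of_le hab] at hx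
        exact abs_of_nonneg (div_nonneg (hp x hx) (sq_nonneg _))
      have h2 : 0 ≤ (g a)⁻¹ - (g b)⁻¹ := by
        rw [← ftcH]
        apply integral_nonneg hab
        intro u hu
        exact div_nonneg (hp u hu) (sq_nonneg _)
      rw [h1, ftcH]
      exact (abs_of_nonneg h2).symm
    · have h1 : ∫ x in a..b, |ψ x| = ∫ x in a..b, -ψ x := by
        apply integral_congr
        intro x hx
        rw [uIcc_of_le hab] at hx
        exact abs_of_nonpos (div_nonpos_of_nonpos_of_nonneg (hn x hx) (sq_nonneg _))
      have h2 : (g a)⁻¹ - (g b)⁻¹ ≤ 0 := by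
        rw [← ftcH]
        have h3 : 0 ≤ ∫ x in a..b, -ψ x := integral_nonneg hab (fun u hu =>
          neg_nonneg.mpr (div_nonpos_of_nonpos_of_nonneg (hn u hu) (sq_nonneg _)))
        rw [_root_.intervalIntegral.integral_neg] at h3
        linarith
      rw [h1, _root_.intervalIntegral.integral_neg, ftcH, abs_of_nonpos h2]
  have gsign := VdC.signConst hδ hgc hgl
  have hABle : |(g a)⁻¹ - (g b)⁻¹| ≤ δ⁻¹ := by
    rcases gsign with hg1 | hg2
    · have e1 : (g a)⁻¹ ≤ δ⁻¹ := inv_anti₀ hδ (hg1 a ha)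
      have e2 : (g b)⁻¹ ≤ δ⁻¹ := inv_anti₀ hδ (hg1 b hb)
      have e3 : 0 < (g a)⁻¹ := inv_pos.mpr (lt_of_lt_of_le hδ (hg1 a ha))
      have e4 : 0 < (g b)⁻¹ := inv_pos.mpr (lt_of_lt_of_le hδ (hg1 b hb))
      exact abs_le.mpr ⟨by linarith, by linarith⟩
    · have e1 : (-(g a))⁻¹ ≤ δ⁻¹ := inv_anti₀ hδ (by linarith [hg2 a ha])
      have e2 : (-(g b))⁻¹ ≤ δ⁻¹ := inv_anti₀ hδ (by linarith [hg2 b hb])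
      rw [inv_neg] at e1 e2
      have e3 : (g a)⁻¹ < 0 := inv_lt_zero.mpr (by linarith [hg2 a ha])
      have e4 : (g b)⁻¹ < 0 := inv_lt_zero.mpr (by linarith [hg2 b hb])
      exact abs_le.mpr ⟨by linarith, by linarith⟩
  have hnorm2 : ‖∫ x in a..b, Complex.I * e x * (ψ x : ℂ)‖ ≤ δ⁻¹ := by
    calc ‖∫ x in a..b, Complex.I * e x * (ψ x : ℂ)‖
        ≤ ∫ x in a..b, ‖Complex.I * e x * (ψ x : ℂ)‖ := norm_integral_le_integral_norm hab
      _ = ∫ x in a..b, |ψ x| := by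
          apply integral_congr
          intro x hx
          simp [map_mul, Complex.norm_exp,
            he_def]
      _ = |(g a)⁻¹ - (g b)⁻¹| := habs
      _ ≤ δ⁻¹ := hABle
  calc ‖∫ x in a..b, e x‖
      = ‖F b - F a - ∫ x in a..b, Complex.I * e x * (ψ x : ℂ)‖ := by rw [hsplit]
    _ ≤ ‖F b - F a‖ + ‖∫ x in a..b, Complex.I * e x * (ψ x : ℂ)‖ := norm_sub_le _ _
    _ ≤ (‖F b‖ + ‖F a‖) + ‖∫ x in a..b, Complex.I * e x * (ψ x : ℂ)‖ :=
        add_le_add_left (norm_sub_le _ _) _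
    _ ≤ (δ⁻¹ + δ⁻¹) + δ⁻¹ := add_le_add (add_le_add (hFnorm b hb) (hFnorm a ha)) hnorm2
    _ = 3 / δ := by rw [div_eq_mul_inv]; ring

end VdC2

open MeasureTheory intervalIntegral Set

namespace VdC3

lemma split {a b c δ M : ℝ} {f : ℝ → ℂ} (hab : a ≤ b) (hδ : 0 ≤ δ) (hM : 0 ≤ M)
    (hf : ContinuousOn f (Icc a b)) (hbd : ∀ x ∈ Icc a b, ‖f x‖ ≤ 1)
    (H : ∀ a' b', a ≤ a' → a' ≤ b' → b' ≤ b → (∀ x ∈ Icc a' b', δ ≤ |x - c|) →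
      ‖∫ x in a'..b', f x‖ ≤ M) :
    ‖∫ x in a..b, f x‖ ≤ 2 * M + 2 * δ := by
  have hint : ∀ a' b', a ≤ a' → b' ≤ b → a' ≤ b' → IntervalIntegrable f volume a' b' := by
    intro a' b' h1 h2 h3
    apply ContinuousOn.intervalIntegrable
    rw [uIcc_of_le h3]
    exact hf.mono (Icc_subset_Icc h1 h2)
  by_cases hc1 : b ≤ c - δ
  · have := H a b le_rfl hab le_rfl (fun x hx => by
      rw [abs_of_nonpos (by linarith [hx.2])]; linarith [hx.2])
    linarith
  by_cases hc2 : c + δ ≤ a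
  · have := H a b le_rfl hab le_rfl (fun x hx => by
      rw [abs_of_nonneg (by linarith [hx.1])]; linarith [hx.1])
    linarith
  push_neg at hc1 hc2
  set p := max a (c - δ) with hp_def
  set q := min b (c + δ) with hq_def
  have hap : a ≤ p := le_max_left _ _
  have hqb : q ≤ b := min_le_left _ _
  have hpq : p ≤ q := by
    apply max_le
    · exact le_min hab hc2.le
    · exact le_min hc1.le (by linarith)
  have hpb : p ≤ b := hpq.trans hqb
  have haq : a ≤ q := hap.trans hpq
  have e1 := integral_add_adjacent_intervals (hint a p le_rfl hpb hap) (hint p q hap hqb hpq)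
  have e2 := integral_add_adjacent_intervals (hint a q le_rfl hqb haq) (hint q b haq le_rfl hqb)
  have hL : ‖∫ x in a..p, f x‖ ≤ M := by
    rcases eq_or_lt_of_le hap with he | hlt
    · rw [← he]
      simp [hM]
    · have hpc : p ≤ c - δ := by
        rcases max_choice a (c - δ) with h1 | h1
        · rw [hp_def] at hlt; rw [h1] at hlt; exact absurd hlt (lt_irrefl a)
        · rw [hp_def, h1]
      refine H a p le_rfl hap hpb (fun x hx => ?_)
      rw [abs_of_nonpos (by linarith [hx.2])]
      linarith [hx.2]
  have hR : ‖∫ x in q..b, f x‖ ≤ M := by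
    rcases eq_or_lt_of_le hqb with he | hlt
    · rw [he]
      simp [hM]
    · have hqc : c + δ ≤ q := by
        rcases min_choice b (c + δ) with h1 | h1
        · rw [hq_def] at hlt; rw [h1] at hlt; exact absurd hlt (lt_irrefl b)
        · rw [hq_def, h1]
      refine H q b haq hqb le_rfl (fun x hx => ?_)
      rw [abs_of_nonneg (by linarith [hx.1])]
      linarith [hx.1]
  have hMid : ‖∫ x in p..q, f x‖ ≤ 2 * δ := by
    have h1 : ‖∫ x in p..q, f x‖ ≤ 1 * |q - p| := by
      apply intervalIntegral.norm_integral_le_of_norm_le_const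
      intro x hx
      rw [uIoc_of_le hpq] at hx
      exact hbd x ⟨hap.trans hx.1.le, hx.2.trans hqb⟩
    have h2 : |q - p| ≤ 2 * δ := by
      rw [abs_of_nonneg (by linarith)]
      have := le_max_right a (c - δ)
      have := min_le_right b (c + δ)
      simp only [← hp_def, ← hq_def] at *
      linarith
    linarith
  calc ‖∫ x in a..b, f x‖
      = ‖(∫ x in a..p, f x) + (∫ x in p..q, f x) + (∫ x in q..b, f x)‖ := by
        rw [e1, e2]
    _ ≤ ‖(∫ x in a..p, f x) + (∫ x in p..q, f x)‖ + ‖∫ x in q..b, f x‖ := norm_add_le _ _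
    _ ≤ (‖∫ x in a..p, f x‖ + ‖∫ x in p..q, f x‖) + ‖∫ x in q..b, f x‖ :=
        add_le_add_left (norm_add_le _ _) _
    _ ≤ (M + 2 * δ) + M := add_le_add (add_le_add hL hMid) hR
    _ = 2 * M + 2 * δ := by ring

end VdC3
namespace VdC4

open MeasureTheory intervalIntegral Set

lemma enorm1 (φ : ℝ → ℝ) (x : ℝ) : ‖Complex.exp (Complex.I * (φ x : ℂ))‖ = 1 := by
  simp [Complex.norm_exp]

lemma econt {φ : ℝ → ℝ} {s : Set ℝ} (h : ContinuousOn φ s) :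
    ContinuousOn (fun x => Complex.exp (Complex.I * (φ x : ℂ))) s :=
  Complex.continuous_exp.comp_continuousOn
    (continuousOn_const.mul (Complex.continuous_ofReal.comp_continuousOn h))

lemma core (k : ℕ) (hk : 2 ≤ k) : ∀ a b : ℝ, a ≤ b → ∀ d : ℕ → ℝ → ℝ,
    (∀ i < k, ∀ x ∈ Icc a b, HasDerivWithinAt (d i) (d (i + 1) x) (Icc a b) x) →
    ContinuousOn (d k) (Icc a b) →
    ∀ α : ℝ, 0 < α → (∀ x ∈ Icc a b, α ≤ |d k x|) →
    ‖∫ x in a..b, Complex.exp (Complex.I * (d 0 x : ℂ))‖ ≤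
      (5 * 2 ^ (k - 1) - 2 : ℝ) / α ^ ((1 : ℝ) / k) := by
  induction k, hk using Nat.le_induction with
  | base =>
    intro a b hab d hd hck α hα hl
    set δ := α ^ (-(1 : ℝ) / 2) with hδ_def
    have hδ : 0 < δ := Real.rpow_pos_of_pos hα _
    set β := α ^ ((1 : ℝ) / 2) with hβ_def
    have hβ : 0 < β := Real.rpow_pos_of_pos hα _
    have hαδ : α * δ = β := by
      rw [hδ_def, hβ_def, show α * α ^ (-(1 : ℝ) / 2) = α ^ (1 : ℝ) * α ^ (-(1 : ℝ) / 2) by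
        rw [Real.rpow_one], ← Real.rpow_add hα]
      norm_num
    have hδβ : δ = β⁻¹ := by
      rw [hδ_def, hβ_def, show (-(1 : ℝ) / 2) = -((1 : ℝ) / 2) by ring, Real.rpow_neg hα.le]
    have hd1 : ∀ x ∈ Icc a b, HasDerivWithinAt (d 1) (d 2 x) (Icc a b) x :=
      hd 1 (by norm_num)
    have hd0 : ∀ x ∈ Icc a b, HasDerivWithinAt (d 0) (d 1 x) (Icc a b) x :=
      hd 0 (by norm_num)
    have hφc : ContinuousOn (d 0) (Icc a b) := fun t ht => (hd0 t ht).continuousWithinAt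
    obtain ⟨c, hcmem, H⟩ := VdC.lowerBound hab hα hd1 hck hl
    have hsign := VdC.signConst hα hck hl
    have hsign' : (∀ x ∈ Icc a b, 0 ≤ d 2 x) ∨ (∀ x ∈ Icc a b, d 2 x ≤ 0) := by
      rcases hsign with h1 | h1
      · exact Or.inl fun x hx => le_trans hα.le (h1 x hx)
      · exact Or.inr fun x hx => le_trans (h1 x hx) (by linarith)
    have key := VdC3.split (c := c) (M := 3 / (α * δ)) hab hδ.le
      (by positivity) (econt hφc) (fun x _ => le_of_eq (enorm1 _ _)) ?_
    · calc ‖∫ x in a..b, Complex.exp (Complex.I * (d 0 x : ℂ))‖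
          ≤ 2 * (3 / (α * δ)) + 2 * δ := key
        _ = (5 * 2 ^ (2 - 1) - 2 : ℝ) / α ^ ((1 : ℝ) / (2 : ℕ)) := by
            rw [hαδ, hδβ]
            have : ((2 : ℕ) : ℝ) = 2 := by norm_num
            rw [this, ← hβ_def]
            field_simp
            ring
    · intro a' b' h1 h2 h3 h4
      have hsub : Icc a' b' ⊆ Icc a b := Icc_subset_Icc h1 h3
      apply VdC2.L1 (g := d 1) (h := d 2) h2 (mul_pos hα hδ)
      · exact fun x hx => (hd0 x (hsub hx)).mono hsub
      · exact fun x hx => (hd1 x (hsub hx)).mono hsub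
      · exact hck.mono hsub
      · exact fun x hx => H x (hsub hx) δ hδ.le (h4 x hx)
      · rcases hsign' with h5 | h5
        · exact Or.inl fun x hx => h5 x (hsub hx)
        · exact Or.inr fun x hx => h5 x (hsub hx)
  | succ k hk2 ih =>
    intro a b hab d hd hck α hα hl
    have hkR : (0 : ℝ) < (k : ℝ) := by
      have : 0 < k := by omega
      exact_mod_cast this
    set δ := α ^ (-(1 : ℝ) / ((k : ℝ) + 1)) with hδ_def
    have hδ : 0 < δ := Real.rpow_pos_of_pos hα _
    set β := α ^ ((1 : ℝ) / ((k : ℝ) + 1)) with hβ_def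
    have hβ : 0 < β := Real.rpow_pos_of_pos hα _
    have hδβ : δ = β⁻¹ := by
      rw [hδ_def, hβ_def, show (-(1 : ℝ) / ((k : ℝ) + 1)) = -((1 : ℝ) / ((k : ℝ) + 1)) by ring,
        Real.rpow_neg hα.le]
    have hαδ : (α * δ) ^ ((1 : ℝ) / (k : ℝ)) = β := by
      have h1 : α * δ = α ^ ((k : ℝ) / ((k : ℝ) + 1)) := by
        rw [hδ_def, show α * α ^ (-(1 : ℝ) / ((k : ℝ) + 1))
            = α ^ (1 : ℝ) * α ^ (-(1 : ℝ) / ((k : ℝ) + 1)) by rw [Real.rpow_one],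
          ← Real.rpow_add hα]
        congr 1
        field_simp
        ring
      rw [h1, ← Real.rpow_mul hα.le, hβ_def]
      congr 1
      field_simp
    have hdk : ∀ x ∈ Icc a b, HasDerivWithinAt (d k) (d (k + 1) x) (Icc a b) x :=
      hd k (Nat.lt_succ_self k)
    have hckk : ContinuousOn (d k) (Icc a b) := fun t ht => (hdk t ht).continuousWithinAt
    have hd0 : ∀ x ∈ Icc a b, HasDerivWithinAt (d 0) (d 1 x) (Icc a b) x :=
      hd 0 (by omega)
    have hφc : ContinuousOn (d 0) (Icc a b) := fun t ht => (hd0 t ht).continuousWithinAt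
    obtain ⟨c, hcmem, H⟩ := VdC.lowerBound hab hα hdk hck hl
    have hpow1 : (1 : ℝ) ≤ 2 ^ (k - 1) := one_le_pow₀ (by norm_num)
    have hM0 : (0 : ℝ) ≤ (5 * 2 ^ (k - 1) - 2 : ℝ) / (α * δ) ^ ((1 : ℝ) / (k : ℝ)) := by
      apply div_nonneg (by linarith)
      rw [hαδ]
      exact hβ.le
    have key := VdC3.split (c := c)
      (M := (5 * 2 ^ (k - 1) - 2 : ℝ) / (α * δ) ^ ((1 : ℝ) / (k : ℝ))) hab hδ.le hM0
      (econt hφc) (fun x _ => le_of_eq (enorm1 _ _)) ?_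
    · calc ‖∫ x in a..b, Complex.exp (Complex.I * (d 0 x : ℂ))‖
          ≤ 2 * ((5 * 2 ^ (k - 1) - 2 : ℝ) / (α * δ) ^ ((1 : ℝ) / (k : ℝ))) + 2 * δ := key
        _ = (5 * 2 ^ (k + 1 - 1) - 2 : ℝ) / α ^ ((1 : ℝ) / (k + 1 : ℕ)) := by
            rw [hαδ, hδβ]
            have hc1 : ((k + 1 : ℕ) : ℝ) = (k : ℝ) + 1 := by push_cast; ring
            rw [hc1, ← hβ_def]
            have hc2 : (2 : ℝ) ^ (k + 1 - 1) = 2 ^ (k - 1) * 2 := by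
              rw [← pow_succ]
              congr 1
              omega
            rw [hc2]
            field_simp
            ring
    · intro a' b' h1 h2 h3 h4
      have hsub : Icc a' b' ⊆ Icc a b := Icc_subset_Icc h1 h3
      have hres := ih a' b' h2 d
        (fun i hi x hx => (hd i (hi.trans (Nat.lt_succ_self k)) x (hsub hx)).mono hsub)
        (hckk.mono hsub) (α * δ) (mul_pos hα hδ)
        (fun x hx => H x (hsub hx) δ hδ.le (h4 x hx))
      calc ‖∫ x in a'..b', Complex.exp (Complex.I * (d 0 x : ℂ))‖
          ≤ (5 * 2 ^ (k - 1) - 2 : ℝ) / (α * δ) ^ ((1 : ℝ) / (k : ℕ)) := hres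
        _ = (5 * 2 ^ (k - 1) - 2 : ℝ) / (α * δ) ^ ((1 : ℝ) / (k : ℝ)) := rfl

end VdC4
/-- Van der Corput lemma with amplitude: if `φ` is `C^k` on `[a,b]` with
`|φ^{(k)}| ≥ α > 0` there, `k ≥ 2`, then for every `C¹` amplitude `η` on `[a,b]`,
`|∫_a^b e^{iφ} η| ≤ (c_k / α^{1/k}) (|η(b)| + ∫_a^b |η'|)` with
`c_k = 5·2^{k−1} − 2`. -/
theorem van_der_corput_amplitude (k : ℕ) (hk : 2 ≤ k) (a b : ℝ) (hab : a ≤ b)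
    (φ : ℝ → ℝ) (hφ : ContDiffOn ℝ (k : ℕ∞) φ (Set.Icc a b))
    (α : ℝ) (hα : 0 < α)
    (hlow : ∀ x ∈ Set.Icc a b, α ≤ |iteratedDerivWithin k φ (Set.Icc a b) x|)
    (η : ℝ → ℂ) (hη : ContDiffOn ℝ 1 η (Set.Icc a b)) :
    ‖∫ x in a..b, Complex.exp (Complex.I * ((φ x : ℝ) : ℂ)) * η x‖ ≤
      ((5 * 2 ^ (k - 1) - 2 : ℝ) / α ^ ((1 : ℝ) / k)) *
        (‖η b‖ + ∫ x in a..b, ‖derivWithin η (Set.Icc a b) x‖) := by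
  have hpow1 : (1 : ℝ) ≤ 2 ^ (k - 1) := one_le_pow₀ (by norm_num)
  have hC0 : 0 ≤ (5 * 2 ^ (k - 1) - 2 : ℝ) / α ^ ((1 : ℝ) / k) := by
    apply div_nonneg (by linarith)
    exact (Real.rpow_pos_of_pos hα _).le
  rcases eq_or_lt_of_le hab with heq | hlt
  · subst heq
    simp only [intervalIntegral.integral_same, norm_zero]
    have h1 : (0 : ℝ) ≤ ‖η a‖ + 0 := by positivity
    exact mul_nonneg hC0 (by simpa using h1)
  have hudiff : UniqueDiffOn ℝ (Set.Icc a b) := uniqueDiffOn_Icc hlt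
  set d : ℕ → ℝ → ℝ := fun i => iteratedDerivWithin i φ (Set.Icc a b) with hd_def
  have hchain : ∀ i < k, ∀ x ∈ Set.Icc a b,
      HasDerivWithinAt (d i) (d (i + 1) x) (Set.Icc a b) x := by
    intro i hi x hx
    have hdiff : DifferentiableWithinAt ℝ (d i) (Set.Icc a b) x :=
      (hφ.differentiableOn_iteratedDerivWithin (by exact_mod_cast hi) hudiff) x hx
    have h1 := hdiff.hasDerivWithinAt
    have h2 : d (i + 1) x = derivWithin (d i) (Set.Icc a b) x :=
      congrFun iteratedDerivWithin_succ x
    rwa [← h2] at h1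
  have hcontk : ContinuousOn (d k) (Set.Icc a b) :=
    hφ.continuousOn_iteratedDerivWithin (by exact_mod_cast le_rfl) hudiff
  set C := ((5 * 2 ^ (k - 1) - 2 : ℝ) / α ^ ((1 : ℝ) / k)) with hC_def
  set e : ℝ → ℂ := fun t => Complex.exp (Complex.I * ((φ t : ℝ) : ℂ)) with he_def
  have hφcont : ContinuousOn φ (Set.Icc a b) := hφ.continuousOn
  have hec : ContinuousOn e (Set.Icc a b) := VdC4.econt hφcont
  have hIbound : ∀ x ∈ Set.Icc a b, ‖∫ t in a..x, e t‖ ≤ C := by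
    intro x hx
    have hsub : Set.Icc a x ⊆ Set.Icc a b := Set.Icc_subset_Icc le_rfl hx.2
    have hres := VdC4.core k hk a x hx.1 d
      (fun i hi t ht => (hchain i hi t (hsub ht)).mono hsub)
      (hcontk.mono hsub) α hα (fun t ht => hlow t (hsub ht))
    have hd0 : d 0 = φ := iteratedDerivWithin_zero
    rw [hd0] at hres
    exact hres
  -- amplitude step
  have int_e : ∀ x ∈ Set.Icc a b, IntervalIntegrable e MeasureTheory.volume a x := by
    intro x hx
    apply ContinuousOn.intervalIntegrable
    rw [Set.uIcc_of_le hx.1]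
    exact hec.mono (Set.Icc_subset_Icc le_rfl hx.2)
  set I : ℝ → ℂ := fun x => ∫ t in a..x, e t with hI_def
  have hIc : ContinuousOn I (Set.Icc a b) := by
    have h1 : MeasureTheory.IntegrableOn e (Set.uIcc a b) MeasureTheory.volume := by
      rw [Set.uIcc_of_le hab]
      exact hec.integrableOn_Icc
    have := intervalIntegral.continuousOn_primitive_interval (a := a) (b := b) h1
    rwa [Set.uIcc_of_le hab] at this
  set η' : ℝ → ℂ := fun x => derivWithin η (Set.Icc a b) x with hη'_def
  have hη'c : ContinuousOn η' (Set.Icc a b) := hη.continuousOn_derivWithin hudiff le_rfl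
  have hηc : ContinuousOn η (Set.Icc a b) := hη.continuousOn
  set G : ℝ → ℂ := fun x => I x * η x with hG_def
  have hGc : ContinuousOn G (Set.Icc a b) := hIc.mul hηc
  have hGd : ∀ x ∈ Set.Ioo a b,
      HasDerivWithinAt G (e x * η x + I x * η' x) (Set.Ioi x) x := by
    intro x hx
    have hxI : x ∈ Set.Icc a b := Set.Ioo_subset_Icc_self hx
    have hmem : Set.Icc a b ∈ nhds x := Icc_mem_nhds hx.1 hx.2
    have hIx : HasDerivAt I (e x) x := by
      apply intervalIntegral.integral_hasDerivAt_right (int_e x hxI)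
      · exact (hec.mono Set.Ioo_subset_Icc_self).stronglyMeasurableAtFilter isOpen_Ioo x hx
      · exact hec.continuousAt hmem
    have hηx : HasDerivAt η (η' x) x := by
      have hdw : DifferentiableWithinAt ℝ η (Set.Icc a b) x :=
        (hη.differentiableOn one_ne_zero) x hxI
      have hda : DifferentiableAt ℝ η x := hdw.differentiableAt hmem
      rw [hη'_def]
      simp only []
      rw [derivWithin_of_mem_nhds hmem]
      exact hda.hasDerivAt
    exact (hIx.mul hηx).hasDerivWithinAt
  have int_eη : IntervalIntegrable (fun x => e x * η x) MeasureTheory.volume a b := by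
    apply ContinuousOn.intervalIntegrable
    rw [Set.uIcc_of_le hab]
    exact hec.mul hηc
  have int_Iη' : IntervalIntegrable (fun x => I x * η' x) MeasureTheory.volume a b := by
    apply ContinuousOn.intervalIntegrable
    rw [Set.uIcc_of_le hab]
    exact hIc.mul hη'c
  have ftc : ∫ x in a..b, (e x * η x + I x * η' x) = G b - G a :=
    intervalIntegral.integral_eq_sub_of_hasDeriv_right_of_le hab hGc hGd
      (int_eη.add int_Iη')
  have hGa : G a = 0 := by
    simp [hG_def, hI_def]
  rw [intervalIntegral.integral_add int_eη int_Iη', hGa, sub_zero] at ftc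
  have heq2 : ∫ x in a..b, e x * η x = I b * η b - ∫ x in a..b, I x * η' x := by
    rw [hG_def] at ftc
    simp only [] at ftc
    linear_combination ftc
  have hb' : b ∈ Set.Icc a b := Set.right_mem_Icc.mpr hab
  have hbd1 : ‖I b * η b‖ ≤ C * ‖η b‖ := by
    rw [norm_mul]
    exact mul_le_mul_of_nonneg_right (hIbound b hb') (norm_nonneg _)
  have int_n1 : IntervalIntegrable (fun x => ‖I x * η' x‖) MeasureTheory.volume a b := by
    apply ContinuousOn.intervalIntegrable
    rw [Set.uIcc_of_le hab]
    exact (hIc.mul hη'c).norm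
  have int_n2 : IntervalIntegrable (fun x => C * ‖η' x‖) MeasureTheory.volume a b := by
    apply ContinuousOn.intervalIntegrable
    rw [Set.uIcc_of_le hab]
    exact continuousOn_const.mul hη'c.norm
  have hbd2 : ‖∫ x in a..b, I x * η' x‖ ≤ C * ∫ x in a..b, ‖η' x‖ := by
    calc ‖∫ x in a..b, I x * η' x‖
        ≤ ∫ x in a..b, ‖I x * η' x‖ := intervalIntegral.norm_integral_le_integral_norm hab
      _ ≤ ∫ x in a..b, C * ‖η' x‖ := by
          apply intervalIntegral.integral_mono_on hab int_n1 int_n2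
          intro x hx
          rw [norm_mul]
          exact mul_le_mul_of_nonneg_right (hIbound x hx) (norm_nonneg _)
      _ = C * ∫ x in a..b, ‖η' x‖ := intervalIntegral.integral_const_mul _ _
  calc ‖∫ x in a..b, e x * η x‖
      = ‖I b * η b - ∫ x in a..b, I x * η' x‖ := by rw [heq2]
    _ ≤ ‖I b * η b‖ + ‖∫ x in a..b, I x * η' x‖ := norm_sub_le _ _
    _ ≤ C * ‖η b‖ + C * ∫ x in a..b, ‖η' x‖ := add_le_add hbd1 hbd2
    _ = C * (‖η b‖ + ∫ x in a..b, ‖η' x‖) := by ring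
end

section
/- (Uniform dispersive estimate, d = 1) Let ω > 0, λ > 0, γ(k) = sqrt(ω² + 4λ sin²(k/2)), and φ_{t,x}(k) = kx − 2tγ(k). For every η ∈ C¹(𝕋¹) there is a constant C, independent of t and x ∈ ℤ, such that |∫_{𝕋¹} e^{iφ_{t,x}(k)} η(k) dk| ≤ C |t|^{−1/3} ( ‖η'‖_{L¹} + ‖η‖_{L¹} ) whenever |t| ≥ 1. -/
open MeasureTheory Real

set_option maxHeartbeats 1000000
open MeasureTheory Real Set intervalIntegral Complex

noncomputable def osc (φ : ℝ → ℝ) (a b : ℝ) : ℂ := ∫ k in a..b, Complex.exp (Complex.I * (φ k : ℂ))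

lemma norm_cexp_I_mul (r : ℝ) : ‖Complex.exp (Complex.I * (r : ℂ))‖ = 1 := by
  rw [mul_comm]; exact Complex.norm_exp_ofReal_mul_I r

lemma osc_integrable {φ : ℝ → ℝ} (hφ : Continuous φ) (a b : ℝ) :
    IntervalIntegrable (fun k => Complex.exp (Complex.I * (φ k : ℂ))) volume a b :=
  (Complex.continuous_exp.comp (by continuity)).intervalIntegrable a b

lemma sign_dichotomy {ψ : ℝ → ℝ} {a b lb : ℝ} (hc : Continuous ψ) (hlb : 0 < lb)
    (hlow : ∀ k ∈ Icc a b, lb ≤ |ψ k|) :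
    (∀ k ∈ Icc a b, lb ≤ ψ k) ∨ (∀ k ∈ Icc a b, ψ k ≤ -lb) := by
  by_contra h
  push_neg at h
  obtain ⟨⟨k₁, hk₁, hk₁'⟩, ⟨k₂, hk₂, hk₂'⟩⟩ := h
  have h1 : ψ k₁ ≤ -lb := by
    rcases abs_cases (ψ k₁) with ⟨he, _⟩ | ⟨he, _⟩ <;> linarith [hlow k₁ hk₁]
  have h2 : lb ≤ ψ k₂ := by
    rcases abs_cases (ψ k₂) with ⟨he, _⟩ | ⟨he, _⟩ <;> linarith [hlow k₂ hk₂]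
  have hsub : uIcc k₁ k₂ ⊆ Icc a b := uIcc_subset_Icc hk₁ hk₂
  have : (0:ℝ) ∈ uIcc (ψ k₁) (ψ k₂) := by
    rw [Set.mem_uIcc]; left; constructor <;> linarith
  obtain ⟨k₀, hk₀, hψk₀⟩ := intermediate_value_uIcc (hc.continuousOn) this
  have := hlow k₀ (hsub hk₀)
  rw [hψk₀] at this; simp at this; linarith

/-- Van der Corput, order 1: monotone derivative bounded below. -/
lemma vdc1 {φ φ' φ'' : ℝ → ℝ} {a b lb : ℝ}
    (hd1 : ∀ k, HasDerivAt φ (φ' k) k) (hd2 : ∀ k, HasDerivAt φ' (φ'' k) k)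
    (hc2 : Continuous φ'')
    (hab : a ≤ b) (hlb : 0 < lb) (hlow : ∀ k ∈ Icc a b, lb ≤ |φ' k|)
    (hsign : (∀ k ∈ Icc a b, 0 ≤ φ'' k) ∨ (∀ k ∈ Icc a b, φ'' k ≤ 0)) :
    ‖osc φ a b‖ ≤ 3 / lb := by
  have hc1 : Continuous φ' := continuous_iff_continuousAt.mpr fun k => (hd2 k).continuousAt
  have hc0 : Continuous φ := continuous_iff_continuousAt.mpr fun k => (hd1 k).continuousAt
  have huicc : uIcc a b = Icc a b := uIcc_of_le hab
  have hne : ∀ k ∈ Icc a b, φ' k ≠ 0 := fun k hk h0 => by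
    have := hlow k hk; rw [h0] at this; simp at this; linarith
  set u : ℝ → ℂ := fun k => (Complex.I * (φ' k : ℂ))⁻¹ with hu
  set v : ℝ → ℂ := fun k => Complex.exp (Complex.I * (φ k : ℂ)) with hv
  set u' : ℝ → ℂ := fun k => -(Complex.I * (φ'' k : ℂ)) / (Complex.I * (φ' k : ℂ))^2 with hu'
  set v' : ℝ → ℂ := fun k => Complex.I * (φ' k : ℂ) * Complex.exp (Complex.I * (φ k : ℂ)) with hv'
  have hIne : ∀ k ∈ Icc a b, Complex.I * (φ' k : ℂ) ≠ 0 := fun k hk =>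
    mul_ne_zero Complex.I_ne_zero (Complex.ofReal_ne_zero.mpr (hne k hk))
  have hvd : ∀ k ∈ uIcc a b, HasDerivAt v (v' k) k := by
    intro k _
    have h1 : HasDerivAt (fun k : ℝ => Complex.I * (φ k : ℂ)) (Complex.I * (φ' k : ℂ)) k :=
      ((hd1 k).ofReal_comp).const_mul Complex.I
    simpa [hv, hv', mul_comm] using h1.cexp
  have hud : ∀ k ∈ uIcc a b, HasDerivAt u (u' k) k := by
    intro k hk
    have h1 : HasDerivAt (fun k : ℝ => Complex.I * (φ' k : ℂ)) (Complex.I * (φ'' k : ℂ)) k :=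
      ((hd2 k).ofReal_comp).const_mul Complex.I
    have h2 : HasDerivAt (fun k : ℝ => (Complex.I * (φ' k : ℂ))⁻¹)
        (-((Complex.I * (φ' k : ℂ))^2)⁻¹ * (Complex.I * (φ'' k : ℂ))) k :=
      (hasDerivAt_inv (hIne k (huicc ▸ hk))).comp k h1
    have he : u' k = -((Complex.I * (φ' k : ℂ))^2)⁻¹ * (Complex.I * (φ'' k : ℂ)) := by
      rw [hu']; field_simp
    rw [hu, he]; exact h2
  have hu'int : IntervalIntegrable u' volume a b := by
    apply ContinuousOn.intervalIntegrable
    rw [huicc]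
    apply ContinuousOn.div
    · exact (continuous_const.mul (Complex.continuous_ofReal.comp hc2)).neg.continuousOn
    · exact ((continuous_const.mul (Complex.continuous_ofReal.comp hc1)).pow 2).continuousOn
    · exact fun k hk => pow_ne_zero 2 (hIne k hk)
  have hv'int : IntervalIntegrable v' volume a b :=
    ((continuous_const.mul (Complex.continuous_ofReal.comp hc1)).mul
      (Complex.continuous_exp.comp (continuous_const.mul
        (Complex.continuous_ofReal.comp hc0)))).intervalIntegrable a b
  have hibp := intervalIntegral.integral_mul_deriv_eq_deriv_mul hud hvd hu'int hv'int
  have hosc : osc φ a b = ∫ k in a..b, u k * v' k := by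
    rw [osc]
    apply intervalIntegral.integral_congr
    intro k hk
    rw [huicc] at hk
    exact (inv_mul_cancel_left₀ (hIne k hk) _).symm
  have hnu : ∀ k ∈ Icc a b, ‖u k‖ ≤ 1 / lb := by
    intro k hk
    rw [hu]
    simp only [norm_inv, norm_mul, Complex.norm_I, one_mul, Complex.norm_real, Real.norm_eq_abs]
    rw [one_div]
    exact inv_anti₀ hlb (hlow k hk)
  have hnv : ∀ k, ‖v k‖ = 1 := fun k => norm_cexp_I_mul (φ k)
  -- the integral term
  have hkey : ∫ k in a..b, ‖u' k * v k‖ ≤ 1 / lb := by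
    have hptn : ∀ k ∈ uIcc a b, ‖u' k * v k‖ = |φ'' k| / (φ' k)^2 := by
      intro k hk
      rw [norm_mul, hnv, mul_one, hu']
      simp only [norm_div, norm_neg, norm_mul, Complex.norm_I, one_mul, norm_pow,
        Complex.norm_real, Real.norm_eq_abs]
      rw [_root_.sq_abs]
    have hftc : ∫ k in a..b, φ'' k / (φ' k)^2 = 1 / φ' a - 1 / φ' b := by
      have : ∀ k ∈ uIcc a b, HasDerivAt (fun k => -(φ' k)⁻¹) (φ'' k / (φ' k)^2) k := by
        intro k hk
        have := (HasDerivAt.inv (hd2 k) (hne k (huicc ▸ hk))).neg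
        rw [show (fun k => -(φ' k)⁻¹) = -φ'⁻¹ from rfl]
        simpa [neg_div] using this
      have hint : IntervalIntegrable (fun k => φ'' k / (φ' k)^2) volume a b := by
        apply ContinuousOn.intervalIntegrable
        rw [huicc]
        exact ContinuousOn.div hc2.continuousOn ((hc1.pow 2).continuousOn)
          (fun k hk => pow_ne_zero 2 (hne k hk))
      rw [intervalIntegral.integral_eq_sub_of_hasDerivAt this hint]
      simp only [one_div]; ring
    have hbound : 1 / φ' a - 1 / φ' b ≤ 1 / lb ∧ 1 / φ' b - 1 / φ' a ≤ 1 / lb := by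
      have haI : a ∈ Icc a b := ⟨le_refl a, hab⟩
      have hbI : b ∈ Icc a b := ⟨hab, le_refl b⟩
      rcases sign_dichotomy hc1 hlb hlow with hpos | hneg
      · have h1 := hpos a haI; have h2 := hpos b hbI
        have e1 : 1 / φ' a ≤ 1 / lb := one_div_le_one_div_of_le hlb h1
        have e2 : 1 / φ' b ≤ 1 / lb := one_div_le_one_div_of_le hlb h2
        have p1 : 0 < 1 / φ' a := div_pos one_pos (lt_of_lt_of_le hlb h1)
        have p2 : 0 < 1 / φ' b := div_pos one_pos (lt_of_lt_of_le hlb h2)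
        constructor <;> linarith
      · have h1 := hneg a haI; have h2 := hneg b hbI
        have e1 : -(1/lb) ≤ 1 / φ' a := by
          rw [neg_le, ← one_div_neg_eq_neg_one_div]
          apply one_div_le_one_div_of_le hlb; linarith
        have e2 : -(1/lb) ≤ 1 / φ' b := by
          rw [neg_le, ← one_div_neg_eq_neg_one_div]
          apply one_div_le_one_div_of_le hlb; linarith
        have p1 : 1 / φ' a < 0 := by
          apply div_neg_of_pos_of_neg one_pos; linarith
        have p2 : 1 / φ' b < 0 := by
          apply div_neg_of_pos_of_neg one_pos; linarith
        constructor <;> linarith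
    rcases hsign with hp | hn
    · have : ∫ k in a..b, ‖u' k * v k‖ = ∫ k in a..b, φ'' k / (φ' k)^2 := by
        apply intervalIntegral.integral_congr
        intro k hk
        simp only
        rw [hptn k hk, _root_.abs_of_nonneg (hp k (huicc ▸ hk))]
      rw [this, hftc]; exact hbound.1
    · have : ∫ k in a..b, ‖u' k * v k‖ = ∫ k in a..b, -(φ'' k / (φ' k)^2) := by
        apply intervalIntegral.integral_congr
        intro k hk
        simp only
        rw [hptn k hk, _root_.abs_of_nonpos (hn k (huicc ▸ hk))]
        ring
      rw [this, intervalIntegral.integral_neg, hftc]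
      linarith [hbound.2]
  -- assemble
  rw [hosc, hibp]
  have hI : ‖∫ k in a..b, u' k * v k‖ ≤ 1 / lb := by
    refine le_trans ?_ hkey
    exact intervalIntegral.norm_integral_le_integral_norm hab
  have hB : ‖u b * v b‖ ≤ 1 / lb := by
    rw [norm_mul, hnv, mul_one]; exact hnu b ⟨hab, le_refl b⟩
  have hA : ‖u a * v a‖ ≤ 1 / lb := by
    rw [norm_mul, hnv, mul_one]; exact hnu a ⟨le_refl a, hab⟩
  calc ‖u b * v b - u a * v a - ∫ k in a..b, u' k * v k‖
      ≤ ‖u b * v b - u a * v a‖ + ‖∫ k in a..b, u' k * v k‖ := norm_sub_le _ _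
    _ ≤ ‖u b * v b‖ + ‖u a * v a‖ + ‖∫ k in a..b, u' k * v k‖ := by
        linarith [norm_sub_le (u b * v b) (u a * v a)]
    _ ≤ 1/lb + 1/lb + 1/lb := by linarith
    _ = 3 / lb := by ring

/-- Splitting step: if on subintervals where `|ψ| ≥ ρ` the oscillatory integral is ≤ M,
and `|ψ'| ≥ lb`, then the total is ≤ 2M + 2ρ/lb. -/
lemma vdc_step {φ ψ ψ' : ℝ → ℝ} {a b lb ρ M : ℝ}
    (hφc : Continuous φ) (hψd : ∀ k, HasDerivAt ψ (ψ' k) k)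
    (hab : a ≤ b) (hρ : 0 < ρ) (hlb : 0 < lb) (hM : 0 ≤ M)
    (hlow : ∀ k ∈ Icc a b, lb ≤ |ψ' k|)
    (hMb : ∀ u v, a ≤ u → u ≤ v → v ≤ b → (∀ k ∈ Icc u v, ρ ≤ |ψ k|) → ‖osc φ u v‖ ≤ M) :
    ‖osc φ a b‖ ≤ 2 * M + 2 * ρ / lb := by
  have hψc : Continuous ψ := continuous_iff_continuousAt.mpr fun k => (hψd k).continuousAt
  set S : Set ℝ := {k ∈ Icc a b | |ψ k| < ρ} with hS
  by_cases hne : S.Nonempty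
  · set c := sInf S with hc
    set d := sSup S with hd
    have hbddb : BddBelow S := BddBelow.mono (fun k hk => hk.1) bddBelow_Icc
    have hbdda : BddAbove S := BddAbove.mono (fun k hk => hk.1) bddAbove_Icc
    have hSsub : S ⊆ Icc a b := fun k hk => hk.1
    have hccl : c ∈ closure S := csInf_mem_closure hne hbddb
    have hdcl : d ∈ closure S := csSup_mem_closure hne hbdda
    have hcI : c ∈ Icc a b := isClosed_Icc.closure_subset_iff.mpr hSsub hccl
    have hdI : d ∈ Icc a b := isClosed_Icc.closure_subset_iff.mpr hSsub hdcl
    have hcd : c ≤ d := by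
      obtain ⟨k, hk⟩ := hne
      exact le_trans (csInf_le hbddb hk) (le_csSup hbdda hk)
    have hψcle : |ψ c| ≤ ρ := by
      have : c ∈ {k | |ψ k| ≤ ρ} := by
        apply (isClosed_le hψc.abs continuous_const).closure_subset_iff.mpr
          (fun k hk => le_of_lt hk.2) hccl
      exact this
    have hψdle : |ψ d| ≤ ρ := by
      have : d ∈ {k | |ψ k| ≤ ρ} := by
        apply (isClosed_le hψc.abs continuous_const).closure_subset_iff.mpr
          (fun k hk => le_of_lt hk.2) hdcl
      exact this
    -- left piece
    have hleft : ‖osc φ a c‖ ≤ M := by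
      by_cases hcS : c ∈ S
      · -- then c = a
        have hca : c = a := by
          by_contra hca
          have hac : a < c := lt_of_le_of_ne hcI.1 (Ne.symm hca)
          have hopen : IsOpen {k | |ψ k| < ρ} := isOpen_lt hψc.abs continuous_const
          obtain ⟨ε, hε, hball⟩ := Metric.isOpen_iff.mp hopen c hcS.2
          set k' := max a (c - ε/2) with hk'
          have hk'c : k' < c := by
            apply max_lt hac; linarith
          have hk'S : k' ∈ S := by
            constructor
            · exact ⟨le_max_left _ _, le_trans (le_of_lt hk'c) hcI.2⟩
            · apply hball
              rw [Metric.mem_ball, Real.dist_eq, abs_lt]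
              constructor
              · have : c - ε/2 ≤ k' := le_max_right _ _
                linarith
              · linarith
          linarith [csInf_le hbddb hk'S]
        rw [hca]
        have : osc φ a a = 0 := intervalIntegral.integral_same
        rw [this]; simpa using hM
      · apply hMb a c le_rfl hcI.1 (le_trans hcd hdI.2)
        intro k hk
        by_contra hlt
        push_neg at hlt
        have hkS : k ∈ S := ⟨⟨hk.1, le_trans hk.2 (le_trans hcd hdI.2)⟩, hlt⟩
        have : c ≤ k := csInf_le hbddb hkS
        have : k = c := le_antisymm hk.2 this
        exact hcS (this ▸ hkS)
    -- right piece
    have hright : ‖osc φ d b‖ ≤ M := by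
      by_cases hdS : d ∈ S
      · have hdb : d = b := by
          by_contra hdb
          have hdb' : d < b := lt_of_le_of_ne hdI.2 hdb
          have hopen : IsOpen {k | |ψ k| < ρ} := isOpen_lt hψc.abs continuous_const
          obtain ⟨ε, hε, hball⟩ := Metric.isOpen_iff.mp hopen d hdS.2
          set k' := min b (d + ε/2) with hk'
          have hk'd : d < k' := by
            apply lt_min hdb'; linarith
          have hk'S : k' ∈ S := by
            constructor
            · exact ⟨le_trans (le_trans hcI.1 hcd) (le_of_lt hk'd), min_le_left _ _⟩
            · apply hball
              rw [Metric.mem_ball, Real.dist_eq, abs_lt]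
              constructor
              · linarith
              · have : k' ≤ d + ε/2 := min_le_right _ _
                linarith
          linarith [le_csSup hbdda hk'S]
        rw [hdb]
        have : osc φ b b = 0 := intervalIntegral.integral_same
        rw [this]; simpa using hM
      · apply hMb d b (le_trans hcI.1 hcd) hdI.2 le_rfl
        intro k hk
        by_contra hlt
        push_neg at hlt
        have hkS : k ∈ S := ⟨⟨le_trans (le_trans hcI.1 hcd) hk.1, hk.2⟩, hlt⟩
        have : k ≤ d := le_csSup hbdda hkS
        have : k = d := le_antisymm this hk.1
        exact hdS (this ▸ hkS)
    -- middle piece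
    have hmid : ‖osc φ c d‖ ≤ 2 * ρ / lb := by
      have h1 : ‖osc φ c d‖ ≤ 1 * |d - c| := by
        apply intervalIntegral.norm_integral_le_of_norm_le_const
        intro k _
        rw [norm_cexp_I_mul]
      rw [one_mul, _root_.abs_of_nonneg (by linarith : (0:ℝ) ≤ d - c)] at h1
      rcases eq_or_lt_of_le hcd with heq | hlt
      · rw [← heq] at h1 ⊢
        simp only [sub_self] at h1
        calc ‖osc φ c c‖ ≤ 0 := h1
          _ ≤ 2 * ρ / lb := by positivity
      · obtain ⟨ξ, hξ, hslope⟩ := exists_hasDerivAt_eq_slope ψ ψ' hlt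
          (hψc.continuousOn) (fun k _ => hψd k)
        have hξI : ξ ∈ Icc a b := ⟨le_trans hcI.1 (le_of_lt hξ.1), le_trans (le_of_lt hξ.2) hdI.2⟩
        have hlbξ := hlow ξ hξI
        have hnum : |ψ d - ψ c| ≤ 2 * ρ := by
          calc |ψ d - ψ c| ≤ |ψ d| + |ψ c| := abs_sub _ _
            _ ≤ 2 * ρ := by linarith
        have : lb ≤ |ψ d - ψ c| / (d - c) := by
          rw [← abs_of_pos (by linarith : (0:ℝ) < d - c), ← abs_div, ← hslope]
          exact hlbξ
        have hdc : d - c ≤ 2 * ρ / lb := by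
          rw [le_div_iff₀ hlb]
          calc (d - c) * lb ≤ |ψ d - ψ c| := by
                rw [le_div_iff₀ (by linarith : (0:ℝ) < d - c)] at this
                linarith [this]
            _ ≤ 2 * ρ := hnum
        linarith
    have hint : ∀ u v : ℝ, IntervalIntegrable (fun k =>
        Complex.exp (Complex.I * (φ k : ℂ))) volume u v := fun u v => osc_integrable hφc u v
    have hsplit : osc φ a b = osc φ a c + osc φ c d + osc φ d b := by
      rw [osc, osc, osc, osc]
      rw [intervalIntegral.integral_add_adjacent_intervals (hint a c) (hint c d),
        intervalIntegral.integral_add_adjacent_intervals (hint a d) (hint d b)]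
    rw [hsplit]
    calc ‖osc φ a c + osc φ c d + osc φ d b‖
        ≤ ‖osc φ a c + osc φ c d‖ + ‖osc φ d b‖ := norm_add_le _ _
      _ ≤ ‖osc φ a c‖ + ‖osc φ c d‖ + ‖osc φ d b‖ := by linarith [norm_add_le (osc φ a c) (osc φ c d)]
      _ ≤ 2 * M + 2 * ρ / lb := by linarith
  · -- no small point: apply directly
    have : ∀ k ∈ Icc a b, ρ ≤ |ψ k| := by
      intro k hk
      by_contra hlt
      push_neg at hlt
      exact hne ⟨k, hk, hlt⟩
    have := hMb a b le_rfl hab le_rfl this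
    have hpos : 0 ≤ 2 * ρ / lb := by positivity
    linarith

/-- Van der Corput, order 2. -/
lemma vdc2 {φ φ' φ'' : ℝ → ℝ} {a b lb : ℝ}
    (hd1 : ∀ k, HasDerivAt φ (φ' k) k) (hd2 : ∀ k, HasDerivAt φ' (φ'' k) k)
    (hc2 : Continuous φ'')
    (hab : a ≤ b) (hlb : 0 < lb) (hlow : ∀ k ∈ Icc a b, lb ≤ |φ'' k|) :
    ‖osc φ a b‖ ≤ 8 / Real.sqrt lb := by
  have hc0 : Continuous φ := continuous_iff_continuousAt.mpr fun k => (hd1 k).continuousAt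
  have hsq : 0 < Real.sqrt lb := Real.sqrt_pos.mpr hlb
  have hsign := sign_dichotomy hc2 hlb hlow
  have h := vdc_step (ψ := φ') (ψ' := φ'') (ρ := Real.sqrt lb) (M := 3 / Real.sqrt lb)
    hc0 hd2 hab hsq hlb (by positivity) hlow ?_
  · calc ‖osc φ a b‖ ≤ 2 * (3 / Real.sqrt lb) + 2 * Real.sqrt lb / lb := h
      _ = 8 / Real.sqrt lb := by
        have hs : Real.sqrt lb * Real.sqrt lb = lb := Real.mul_self_sqrt (le_of_lt hlb)
        have h2 : 2 * Real.sqrt lb / lb = 2 / Real.sqrt lb := by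
          rw [div_eq_div_iff (ne_of_gt hlb) (ne_of_gt hsq)]; linear_combination 2 * hs
        rw [h2]; ring
  · intro u v hau huv hvb hkey
    apply vdc1 hd1 hd2 hc2 huv hsq hkey
    have hsub : Icc u v ⊆ Icc a b := Icc_subset_Icc hau hvb
    rcases hsign with hp | hn
    · exact Or.inl fun k hk => le_trans (le_of_lt hlb) (hp k (hsub hk))
    · exact Or.inr fun k hk => le_trans (hn k (hsub hk)) (by linarith)

/-- Van der Corput, order 3. -/
lemma vdc3 {φ φ' φ'' φ''' : ℝ → ℝ} {a b lb : ℝ}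
    (hd1 : ∀ k, HasDerivAt φ (φ' k) k) (hd2 : ∀ k, HasDerivAt φ' (φ'' k) k)
    (hd3 : ∀ k, HasDerivAt φ'' (φ''' k) k) (hc3 : Continuous φ''')
    (hab : a ≤ b) (hlb : 0 < lb) (hlow : ∀ k ∈ Icc a b, lb ≤ |φ''' k|) :
    ‖osc φ a b‖ ≤ 18 / lb ^ ((1:ℝ)/3) := by
  have hc0 : Continuous φ := continuous_iff_continuousAt.mpr fun k => (hd1 k).continuousAt
  have hc2 : Continuous φ'' := continuous_iff_continuousAt.mpr fun k => (hd3 k).continuousAt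
  set ρ := lb ^ ((2:ℝ)/3) with hρdef
  have hρpos : 0 < ρ := Real.rpow_pos_of_pos hlb _
  have hcube : 0 < lb ^ ((1:ℝ)/3) := Real.rpow_pos_of_pos hlb _
  have hsqrtρ : Real.sqrt ρ = lb ^ ((1:ℝ)/3) := by
    rw [hρdef, Real.sqrt_eq_rpow, ← Real.rpow_mul (le_of_lt hlb)]
    norm_num
  have h := vdc_step (ψ := φ'') (ψ' := φ''') (ρ := ρ) (M := 8 / lb ^ ((1:ℝ)/3))
    hc0 hd3 hab hρpos hlb (by positivity) hlow ?_
  · calc ‖osc φ a b‖ ≤ 2 * (8 / lb ^ ((1:ℝ)/3)) + 2 * ρ / lb := h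
      _ = 18 / lb ^ ((1:ℝ)/3) := by
        have h1 : ρ / lb = lb ^ ((2:ℝ)/3 - 1) := by
          rw [hρdef, Real.rpow_sub hlb, Real.rpow_one]
        have h2 : ((2:ℝ)/3 - 1) = -(1/3) := by norm_num
        have h3 : ρ / lb = (lb ^ ((1:ℝ)/3))⁻¹ := by
          rw [h1, h2, ← Real.rpow_neg_one (lb ^ ((1:ℝ)/3)), ← Real.rpow_mul (le_of_lt hlb)]
          norm_num
        rw [mul_div_assoc, h3]
        field_simp
        ring
  · intro u v hau huv hvb hkey
    have := vdc2 hd1 hd2 hc2 huv hρpos hkey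
    rwa [hsqrtρ] at this

/-- Amplitude version: oscillatory integral with C¹ amplitude. -/
lemma osc_amplitude {φ : ℝ → ℝ} {η : ℝ → ℂ} {a b M : ℝ}
    (hφc : Continuous φ) (hη : ContDiff ℝ 1 η)
    (hab : a ≤ b) (hF : ∀ u ∈ Icc a b, ‖osc φ a u‖ ≤ M) :
    ‖∫ k in a..b, Complex.exp (Complex.I * (φ k : ℂ)) * η k‖ ≤
      M * (‖η b‖ + ∫ k in a..b, ‖deriv η k‖) := by
  have hM0 : 0 ≤ M := by
    have := hF a ⟨le_rfl, hab⟩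
    simp only [osc, intervalIntegral.integral_same, norm_zero] at this
    exact this
  have hηd : ∀ k, HasDerivAt η (deriv η k) k :=
    fun k => (hη.differentiable one_ne_zero k).hasDerivAt
  have hηc : Continuous η := hη.continuous
  have hη'c : Continuous (deriv η) := hη.continuous_deriv le_rfl
  set e : ℝ → ℂ := fun k => Complex.exp (Complex.I * (φ k : ℂ)) with he
  have heC : Continuous e := Complex.continuous_exp.comp
    (continuous_const.mul (Complex.continuous_ofReal.comp hφc))
  set F : ℝ → ℂ := fun u => ∫ k in a..u, e k with hFdef
  have hFd : ∀ u, HasDerivAt F (e u) u := fun u =>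
    intervalIntegral.integral_hasDerivAt_right ((heC.intervalIntegrable a u))
      (heC.stronglyMeasurableAtFilter _ _) heC.continuousAt
  have hibp := intervalIntegral.integral_mul_deriv_eq_deriv_mul
    (u := η) (v := F) (u' := deriv η) (v' := e)
    (fun k _ => hηd k) (fun k _ => hFd k)
    (hη'c.intervalIntegrable a b) (heC.intervalIntegrable a b)
  have heq : ∫ k in a..b, Complex.exp (Complex.I * (φ k : ℂ)) * η k = ∫ k in a..b, η k * e k := by
    apply intervalIntegral.integral_congr
    intro k _
    simp [he, mul_comm]
  have hFa : F a = 0 := intervalIntegral.integral_same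
  rw [heq, hibp, hFa]
  have hFb : ‖F b‖ ≤ M := hF b ⟨hab, le_rfl⟩
  have hterm : ‖∫ k in a..b, deriv η k * F k‖ ≤ M * ∫ k in a..b, ‖deriv η k‖ := by
    have h1 : ‖∫ k in a..b, deriv η k * F k‖ ≤ |∫ k in a..b, ‖deriv η k‖ * M| := by
      apply intervalIntegral.norm_integral_le_abs_of_norm_le ?_
        ((hη'c.norm.mul continuous_const).intervalIntegrable a b)
      refine (MeasureTheory.ae_restrict_iff' measurableSet_uIoc).mpr (MeasureTheory.ae_of_all _ ?_)
      intro k hk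
      rw [Set.uIoc_of_le hab] at hk
      rw [norm_mul]
      have hkI : k ∈ Icc a b := ⟨le_of_lt hk.1, hk.2⟩
      exact mul_le_mul_of_nonneg_left (hF k hkI) (norm_nonneg _)
    have h2 : |∫ k in a..b, ‖deriv η k‖ * M| = ∫ k in a..b, ‖deriv η k‖ * M := by
      apply _root_.abs_of_nonneg
      apply intervalIntegral.integral_nonneg hab
      intro k _; positivity
    rw [h2] at h1
    calc ‖∫ k in a..b, deriv η k * F k‖ ≤ ∫ k in a..b, ‖deriv η k‖ * M := h1
      _ = M * ∫ k in a..b, ‖deriv η k‖ := by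
        rw [← intervalIntegral.integral_const_mul]
        apply intervalIntegral.integral_congr
        intro k _; ring
  calc ‖η b * F b - η a * 0 - ∫ k in a..b, deriv η k * F k‖
      = ‖η b * F b - ∫ k in a..b, deriv η k * F k‖ := by ring_nf
    _ ≤ ‖η b * F b‖ + ‖∫ k in a..b, deriv η k * F k‖ := norm_sub_le _ _
    _ ≤ ‖η b‖ * M + M * ∫ k in a..b, ‖deriv η k‖ := by
        rw [norm_mul]
        have := mul_le_mul_of_nonneg_left hFb (norm_nonneg (η b))
        linarith [hterm]
    _ = M * (‖η b‖ + ∫ k in a..b, ‖deriv η k‖) := by ring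

/-- Sup bound on a compact interval via mean value + derivative L¹ norm. -/
lemma eta_sup_bound {η : ℝ → ℂ} (hη : ContDiff ℝ 1 η) {k : ℝ} (hk : k ∈ Icc (-π) π) :
    ‖η k‖ ≤ (1/(2*π)) * (∫ s in (-π:ℝ)..π, ‖η s‖) + ∫ s in (-π:ℝ)..π, ‖deriv η s‖ := by
  have hππ : (-π:ℝ) ≤ π := by linarith [Real.pi_pos]
  have hηc : Continuous η := hη.continuous
  have hη'c : Continuous (deriv η) := hη.continuous_deriv le_rfl
  obtain ⟨s₀, hs₀I, hs₀min⟩ := isCompact_Icc.exists_isMinOn (Set.nonempty_Icc.mpr hππ)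
    (hηc.norm.continuousOn)
  have hmin : (2*π) * ‖η s₀‖ ≤ ∫ s in (-π:ℝ)..π, ‖η s‖ := by
    have h1 : ∫ s in (-π:ℝ)..π, ‖η s₀‖ ≤ ∫ s in (-π:ℝ)..π, ‖η s‖ := by
      apply intervalIntegral.integral_mono_on hππ
        (intervalIntegrable_const) (hηc.norm.intervalIntegrable _ _)
      intro s hs
      exact hs₀min hs
    rw [intervalIntegral.integral_const, smul_eq_mul] at h1
    calc (2*π) * ‖η s₀‖ = (π - -π) * ‖η s₀‖ := by ring
      _ ≤ _ := h1
  have hs₀ : ‖η s₀‖ ≤ (1/(2*π)) * ∫ s in (-π:ℝ)..π, ‖η s‖ := by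
    have hp : (0:ℝ) < 2*π := by linarith [Real.pi_pos]
    rw [one_div, inv_mul_eq_div, le_div_iff₀ hp]
    linarith
  have hftc : η k - η s₀ = ∫ s in s₀..k, deriv η s := by
    rw [intervalIntegral.integral_deriv_eq_sub
      (fun s _ => hη.differentiable one_ne_zero s) (hη'c.intervalIntegrable _ _)]
  have hbd : ‖η k - η s₀‖ ≤ ∫ s in (-π:ℝ)..π, ‖deriv η s‖ := by
    rw [hftc]
    refine le_trans (intervalIntegral.norm_integral_le_abs_integral_norm) ?_
    rcases le_total s₀ k with h | h
    · rw [_root_.abs_of_nonneg (intervalIntegral.integral_nonneg h (fun s _ => norm_nonneg _))]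
      apply intervalIntegral.integral_mono_interval hs₀I.1 h hk.2
        (Filter.Eventually.of_forall (fun s => norm_nonneg _))
        (hη'c.norm.intervalIntegrable _ _)
    · rw [intervalIntegral.integral_symm, abs_neg,
        _root_.abs_of_nonneg (intervalIntegral.integral_nonneg h (fun s _ => norm_nonneg _))]
      apply intervalIntegral.integral_mono_interval hk.1 h hs₀I.2
        (Filter.Eventually.of_forall (fun s => norm_nonneg _))
        (hη'c.norm.intervalIntegrable _ _)
  calc ‖η k‖ = ‖η s₀ + (η k - η s₀)‖ := by ring_nf
    _ ≤ ‖η s₀‖ + ‖η k - η s₀‖ := norm_add_le _ _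
    _ ≤ (1/(2*π)) * (∫ s in (-π:ℝ)..π, ‖η s‖) + ∫ s in (-π:ℝ)..π, ‖deriv η s‖ := by
        linarith

section Geometry
variable {ω lam : ℝ}

/-- `q k = γ(k)²` in cosine form. -/
noncomputable def qf (ω lam : ℝ) (k : ℝ) : ℝ := ω^2 + 2*lam - 2*lam*Real.cos k
noncomputable def gf (ω lam : ℝ) (k : ℝ) : ℝ := Real.sqrt (qf ω lam k)
noncomputable def gf1 (ω lam : ℝ) (k : ℝ) : ℝ := lam * Real.sin k / gf ω lam k
noncomputable def gf2 (ω lam : ℝ) (k : ℝ) : ℝ :=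
  lam * Real.cos k / gf ω lam k - lam^2 * Real.sin k^2 / gf ω lam k^3
noncomputable def gf3 (ω lam : ℝ) (k : ℝ) : ℝ :=
  -(lam * Real.sin k) / gf ω lam k - 3*lam^2*Real.sin k*Real.cos k / gf ω lam k^3
    + 3*lam^3*Real.sin k^3 / gf ω lam k^5

lemma qf_eq (k : ℝ) : qf ω lam k = ω^2 + 4*lam*Real.sin (k/2)^2 := by
  have h : Real.cos k = 1 - 2*Real.sin (k/2)^2 := by
    have h2 : Real.cos (2 * (k/2)) = 2*Real.cos (k/2)^2 - 1 := Real.cos_two_mul (k/2)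
    have h3 : Real.sin (k/2)^2 + Real.cos (k/2)^2 = 1 := Real.sin_sq_add_cos_sq (k/2)
    have h4 : (2:ℝ) * (k/2) = k := by ring
    rw [h4] at h2
    linarith
  rw [qf, h]; ring

lemma qf_pos (hω : 0 < ω) (hlam : 0 < lam) (k : ℝ) : 0 < qf ω lam k := by
  have h1 : Real.cos k ≤ 1 := Real.cos_le_one k
  have : 0 < ω^2 := by positivity
  rw [qf]; nlinarith

lemma gf_pos (hω : 0 < ω) (hlam : 0 < lam) (k : ℝ) : 0 < gf ω lam k :=
  Real.sqrt_pos.mpr (qf_pos hω hlam k)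

lemma gf_sq (hω : 0 < ω) (hlam : 0 < lam) (k : ℝ) : gf ω lam k ^ 2 = qf ω lam k :=
  Real.sq_sqrt (le_of_lt (qf_pos hω hlam k))

lemma qf_hasDeriv (k : ℝ) : HasDerivAt (qf ω lam) (2*lam*Real.sin k) k := by
  have h : HasDerivAt (fun k => ω^2 + 2*lam - 2*lam*Real.cos k)
      (-(2*lam * (-Real.sin k))) k := ((Real.hasDerivAt_cos k).const_mul (2*lam)).const_sub _
  exact h.congr_deriv (by ring)

lemma gf_hasDeriv (hω : 0 < ω) (hlam : 0 < lam) (k : ℝ) :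
    HasDerivAt (gf ω lam) (gf1 ω lam k) k := by
  have h := (Real.hasDerivAt_sqrt (ne_of_gt (qf_pos hω hlam k))).comp k (qf_hasDeriv k)
  refine h.congr_deriv ?_
  rw [gf1, gf]
  field_simp

lemma gf1_hasDeriv (hω : 0 < ω) (hlam : 0 < lam) (k : ℝ) :
    HasDerivAt (gf1 ω lam) (gf2 ω lam k) k := by
  have hgne : gf ω lam k ≠ 0 := ne_of_gt (gf_pos hω hlam k)
  have hnum : HasDerivAt (fun k => lam * Real.sin k) (lam * Real.cos k) k :=
    (Real.hasDerivAt_sin k).const_mul lam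
  have h := hnum.div (gf_hasDeriv hω hlam k) hgne
  have heq : gf1 ω lam = fun k => lam * Real.sin k / gf ω lam k := rfl
  rw [heq]
  refine h.congr_deriv ?_
  rw [gf2, gf1]
  field_simp

lemma gf2_hasDeriv (hω : 0 < ω) (hlam : 0 < lam) (k : ℝ) :
    HasDerivAt (gf2 ω lam) (gf3 ω lam k) k := by
  have hgne : gf ω lam k ≠ 0 := ne_of_gt (gf_pos hω hlam k)
  have hg3ne : gf ω lam k ^ 3 ≠ 0 := pow_ne_zero 3 hgne
  have hnum1 : HasDerivAt (fun k => lam * Real.cos k) (-(lam * Real.sin k)) k := by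
    have := (Real.hasDerivAt_cos k).const_mul lam
    exact this.congr_deriv (by ring)
  have hnum2 : HasDerivAt (fun k => lam^2 * Real.sin k^2)
      (lam^2 * (2*Real.sin k*Real.cos k)) k := by
    have hs : HasDerivAt (fun k => Real.sin k ^ 2)
        (2 * Real.sin k ^ 1 * Real.cos k) k := (Real.hasDerivAt_sin k).pow 2
    have := hs.const_mul (lam^2)
    exact this.congr_deriv (by ring)
  have hden3 : HasDerivAt (fun k => gf ω lam k ^ 3)
      (3 * gf ω lam k ^ 2 * gf1 ω lam k) k := by
    have := (gf_hasDeriv hω hlam k).pow 3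
    exact this.congr_deriv (by norm_num)
  have h1 := hnum1.div (gf_hasDeriv hω hlam k) hgne
  have h2 := hnum2.div hden3 hg3ne
  have h := h1.sub h2
  have heq : gf2 ω lam = fun k =>
      lam * Real.cos k / gf ω lam k - lam^2 * Real.sin k^2 / gf ω lam k^3 := rfl
  rw [heq]
  refine h.congr_deriv ?_
  rw [gf3, gf1]
  field_simp
  ring

lemma gf_continuous (hω : 0 < ω) (hlam : 0 < lam) : Continuous (gf ω lam) :=
  continuous_iff_continuousAt.mpr fun k => (gf_hasDeriv hω hlam k).continuousAt

lemma gf1_continuous (hω : 0 < ω) (hlam : 0 < lam) : Continuous (gf1 ω lam) :=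
  continuous_iff_continuousAt.mpr fun k => (gf1_hasDeriv hω hlam k).continuousAt

lemma gf2_continuous (hω : 0 < ω) (hlam : 0 < lam) : Continuous (gf2 ω lam) :=
  continuous_iff_continuousAt.mpr fun k => (gf2_hasDeriv hω hlam k).continuousAt

lemma gf3_continuous (hω : 0 < ω) (hlam : 0 < lam) : Continuous (gf3 ω lam) := by
  have hgc := gf_continuous hω hlam
  have hgne : ∀ k, gf ω lam k ≠ 0 := fun k => ne_of_gt (gf_pos hω hlam k)
  apply Continuous.add
  apply Continuous.sub
  · exact ((continuous_const.mul Real.continuous_sin).neg).div hgc hgne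
  · exact (((continuous_const.mul Real.continuous_sin)).mul Real.continuous_cos).div
      (hgc.pow 3) (fun k => pow_ne_zero 3 (hgne k))
  · exact (continuous_const.mul (Real.continuous_sin.pow 3)).div
      (hgc.pow 5) (fun k => pow_ne_zero 5 (hgne k))

/-- `γ''` and `γ'''` never vanish simultaneously. -/
lemma gf23_pos (hω : 0 < ω) (hlam : 0 < lam) (k : ℝ) : 0 < |gf2 ω lam k| + |gf3 ω lam k| := by
  by_contra h
  push_neg at h
  have h2 : gf2 ω lam k = 0 := by
    have := abs_nonneg (gf2 ω lam k); have := abs_nonneg (gf3 ω lam k)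
    have : |gf2 ω lam k| = 0 := by linarith
    exact abs_eq_zero.mp this
  have h3 : gf3 ω lam k = 0 := by
    have := abs_nonneg (gf2 ω lam k); have := abs_nonneg (gf3 ω lam k)
    have : |gf3 ω lam k| = 0 := by linarith
    exact abs_eq_zero.mp this
  have hGpos : 0 < gf ω lam k := gf_pos hω hlam k
  have hGne : gf ω lam k ≠ 0 := ne_of_gt hGpos
  have e1 : lam * Real.cos k * gf ω lam k^2 - lam^2 * Real.sin k^2 = 0 := by
    rw [gf2] at h2
    field_simp at h2
    have hmul : gf ω lam k * (lam * Real.cos k * gf ω lam k^2 - lam^2 * Real.sin k^2)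
        = gf ω lam k * 0 := by linear_combination gf ω lam k * h2
    exact mul_left_cancel₀ hGne hmul
  have e2 : -(lam * Real.sin k) * gf ω lam k^4 - 3*lam^2*Real.sin k*Real.cos k*gf ω lam k^2
      + 3*lam^3*Real.sin k^3 = 0 := by
    rw [gf3] at h3
    field_simp at h3
    have hmul : gf ω lam k^4 * (-(lam * Real.sin k) * gf ω lam k^4
        - 3*lam^2*Real.sin k*Real.cos k*gf ω lam k^2 + 3*lam^3*Real.sin k^3)
        = gf ω lam k^4 * 0 := by linear_combination gf ω lam k^4 * h3
    exact mul_left_cancel₀ (pow_ne_zero 4 hGne) hmul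
  have hsc : Real.sin k^2 + Real.cos k^2 = 1 := Real.sin_sq_add_cos_sq k
  have hs0 : lam * Real.sin k * (gf ω lam k^2)^2 = 0 := by
    linear_combination (-1 : ℝ) * e2 - 3*lam*Real.sin k*e1
  have hG2 : 0 < gf ω lam k^2 := by positivity
  have hs : Real.sin k = 0 := by
    rcases mul_eq_zero.mp hs0 with h' | h'
    · rcases mul_eq_zero.mp h' with h'' | h''
      · exact absurd h'' (ne_of_gt hlam)
      · exact h''
    · exact absurd h' (by positivity)
  have hc : Real.cos k = 0 := by
    rw [hs] at e1
    have he : lam * Real.cos k * gf ω lam k^2 = 0 := by linarith [e1]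
    rcases mul_eq_zero.mp he with h' | h'
    · rcases mul_eq_zero.mp h' with h'' | h''
      · exact absurd h'' (ne_of_gt hlam)
      · exact h''
    · exact absurd h' (ne_of_gt hG2)
  rw [hs, hc] at hsc
  norm_num at hsc

end Geometry


/-- Uniform dispersive estimate in one dimension: with
`γ(k) = sqrt(ω² + 4λ sin²(k/2))` and phase `φ_{t,x}(k) = kx − 2tγ(k)`, for every
`C¹`, `2π`-periodic amplitude `η` on the torus `(-π,π]` there is a constant `C`,
independent of `t` and `x ∈ ℤ`, such that
`|∫_{𝕋¹} e^{iφ_{t,x}} η| ≤ C |t|^{-1/3} (‖η'‖_{L¹} + ‖η‖_{L¹})` for `|t| ≥ 1`. -/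
theorem uniform_dispersive_estimate_one_dim (ω lam : ℝ) (hω : 0 < ω) (hlam : 0 < lam)
    (γ : ℝ → ℝ)
    (hγ : ∀ k, γ k = Real.sqrt (ω ^ 2 + 4 * lam * Real.sin (k / 2) ^ 2))
    (η : ℝ → ℂ) (hη : ContDiff ℝ 1 η)
    (hper : ∀ k : ℝ, η (k + 2 * π) = η k) :
    ∃ C : ℝ, ∀ (t : ℝ) (x : ℤ), 1 ≤ |t| →
      ‖∫ k in Set.Ioc (-π) π,
          Complex.exp (Complex.I * ((k * (x : ℝ) - 2 * t * γ k : ℝ) : ℂ)) * η k‖ ≤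
        (C / |t| ^ ((1 : ℝ) / 3)) *
          ((∫ k in Set.Ioc (-π) π, ‖deriv η k‖) + ∫ k in Set.Ioc (-π) π, ‖η k‖) := by
  have hπ : (0:ℝ) < π := Real.pi_pos
  have hππ : (-π:ℝ) ≤ π := by linarith
  have hγg : γ = gf ω lam := by
    funext k
    rw [hγ k, gf, qf_eq]
  -- minimum of |γ''| + |γ'''| on the compact interval
  have hcont23 : Continuous (fun k => |gf2 ω lam k| + |gf3 ω lam k|) :=
    ((gf2_continuous hω hlam).abs.add (gf3_continuous hω hlam).abs)
  obtain ⟨k₀, hk₀I, hmin⟩ := isCompact_Icc.exists_isMinOn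
    (Set.nonempty_Icc.mpr hππ) hcont23.continuousOn
  set c : ℝ := |gf2 ω lam k₀| + |gf3 ω lam k₀| with hcdef
  have hc : 0 < c := gf23_pos hω hlam k₀
  -- open cover and Lebesgue number
  set U : Bool → Set ℝ := fun i =>
    if i then {k | c/3 < |gf2 ω lam k|} else {k | c/3 < |gf3 ω lam k|} with hU
  have hUopen : ∀ i, IsOpen (U i) := by
    intro i
    cases i <;> simp only [hU, if_true, if_false, Bool.false_eq_true]
    · exact isOpen_lt continuous_const (gf3_continuous hω hlam).abs
    · exact isOpen_lt continuous_const (gf2_continuous hω hlam).abs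
  have hcover : Icc (-π) π ⊆ ⋃ i, U i := by
    intro k hk
    have hmk : c ≤ |gf2 ω lam k| + |gf3 ω lam k| := hmin hk
    by_cases h2 : c/3 < |gf2 ω lam k|
    · exact Set.mem_iUnion.mpr ⟨true, by simp [hU]; exact h2⟩
    · push_neg at h2
      have h3 : c/3 < |gf3 ω lam k| := by linarith
      exact Set.mem_iUnion.mpr ⟨false, by simp [hU]; exact h3⟩
  obtain ⟨δ, hδ, hleb⟩ := lebesgue_number_lemma_of_metric isCompact_Icc hUopen hcover
  -- number of pieces
  obtain ⟨N, hN⟩ := exists_nat_gt (2*π/δ)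
  have hNpos : 0 < (N:ℝ) := lt_trans (by positivity) hN
  have hN0 : N ≠ 0 := by
    intro h; rw [h] at hNpos; simp at hNpos
  have hstep : 2*π/(N:ℝ) < δ := by
    rw [div_lt_iff₀ hNpos]
    rw [div_lt_iff₀ hδ] at hN
    linarith [hN]
  have hsteppos : 0 < 2*π/(N:ℝ) := by positivity
  set aj : ℕ → ℝ := fun j => -π + j*(2*π/(N:ℝ)) with haj
  have haj0 : aj 0 = -π := by simp [haj]
  have hajN : aj N = π := by
    rw [haj]
    field_simp
    ring
  have hajmono : ∀ j : ℕ, aj j < aj (j+1) := by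
    intro j
    simp only [haj]
    push_cast
    nlinarith [hsteppos]
  have hajle : ∀ j : ℕ, j ≤ N → aj j ∈ Icc (-π) π := by
    intro j hj
    constructor
    · simp only [haj]
      have : (0:ℝ) ≤ j*(2*π/(N:ℝ)) := by positivity
      linarith
    · simp only [haj]
      have hjN : (j:ℝ) ≤ (N:ℝ) := Nat.cast_le.mpr hj
      have : (j:ℝ)*(2*π/(N:ℝ)) ≤ (N:ℝ)*(2*π/(N:ℝ)) := by
        apply mul_le_mul_of_nonneg_right hjN (le_of_lt hsteppos)
      have hNeq : (N:ℝ)*(2*π/(N:ℝ)) = 2*π := by field_simp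
      linarith
  have hajdiff : ∀ j : ℕ, aj (j+1) - aj j = 2*π/(N:ℝ) := by
    intro j
    simp only [haj]
    push_cast
    ring
  -- constants
  set cK : ℝ := 2*(c/3) with hcK
  have hcKpos : 0 < cK := by rw [hcK]; linarith
  set K : ℝ := max (8 / Real.sqrt cK) (18 / cK ^ ((1:ℝ)/3)) with hK
  have hKpos : 0 < K := lt_max_of_lt_left (by positivity)
  set C : ℝ := K * ((N:ℝ)+1) * (1/(2*π)+1) with hC
  refine ⟨C, ?_⟩
  intro t x ht
  have htpos : (0:ℝ) < |t| := lt_of_lt_of_le one_pos ht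
  set T : ℝ := |t| ^ ((1:ℝ)/3) with hT
  have hTpos : 0 < T := Real.rpow_pos_of_pos htpos _
  -- the phase and its derivatives
  set φ : ℝ → ℝ := fun k => k * (x:ℝ) - 2*t*γ k with hφ
  set φ1 : ℝ → ℝ := fun k => (x:ℝ) - 2*t*gf1 ω lam k with hφ1
  set φ2 : ℝ → ℝ := fun k => -(2*t)*gf2 ω lam k with hφ2
  set φ3 : ℝ → ℝ := fun k => -(2*t)*gf3 ω lam k with hφ3
  have hd1 : ∀ k, HasDerivAt φ (φ1 k) k := by
    intro k
    rw [hφ, hγg]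
    have h1 : HasDerivAt (fun k : ℝ => k * (x:ℝ)) (x:ℝ) k := hasDerivAt_mul_const _
    have h2 := ((gf_hasDeriv hω hlam k).const_mul (2*t))
    have := h1.sub h2
    exact this
  have hd2 : ∀ k, HasDerivAt φ1 (φ2 k) k := by
    intro k
    have h2 := ((gf1_hasDeriv hω hlam k).const_mul (2*t)).const_sub (x:ℝ)
    exact h2.congr_deriv (by simp only [hφ2]; ring)
  have hd3 : ∀ k, HasDerivAt φ2 (φ3 k) k := by
    intro k
    have h2 := (gf2_hasDeriv hω hlam k).const_mul (-(2*t))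
    simpa [hφ2, hφ3] using h2
  have hφc : Continuous φ := continuous_iff_continuousAt.mpr fun k => (hd1 k).continuousAt
  have hφ2c : Continuous φ2 := continuous_const.mul (gf2_continuous hω hlam)
  have hφ3c : Continuous φ3 := continuous_const.mul (gf3_continuous hω hlam)
  have h2t : (0:ℝ) < 2*|t| := by linarith
  -- uniform bound on partial oscillatory integrals over each piece
  have hpiece : ∀ j : ℕ, j < N → ∀ u ∈ Icc (aj j) (aj (j+1)), ‖osc φ (aj j) u‖ ≤ K / T := by
    intro j hj u hu
    obtain ⟨i, hball⟩ := hleb (aj j) (hajle j (le_of_lt hj))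
    have hsubball : Icc (aj j) u ⊆ Metric.ball (aj j) δ := by
      intro k hk
      rw [Metric.mem_ball, Real.dist_eq, abs_lt]
      have h1 : aj j ≤ k := hk.1
      have h2 : k ≤ u := hk.2
      have h3 : u ≤ aj (j+1) := hu.2
      have := hajdiff j
      have h4 := hstep
      constructor
      · linarith
      · calc k - aj j ≤ aj (j+1) - aj j := by linarith
          _ = 2*π/(N:ℝ) := this
          _ < δ := h4
    cases i
    · -- third-derivative regime
      have hlow : ∀ k ∈ Icc (aj j) u, 2 * |t| * (c/3) ≤ |φ3 k| := by
        intro k hk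
        have hkU : k ∈ U false := hball (hsubball hk)
        simp only [hU, if_false, Bool.false_eq_true, Set.mem_setOf_eq] at hkU
        have : |φ3 k| = 2 * |t| * |gf3 ω lam k| := by
          simp only [hφ3]
          rw [_root_.abs_mul, _root_.abs_neg, _root_.abs_mul, _root_.abs_two]
        rw [this]
        have := mul_le_mul_of_nonneg_left (le_of_lt hkU) (le_of_lt h2t)
        linarith [this]
      have := vdc3 hd1 hd2 hd3 hφ3c hu.1 (by positivity : (0:ℝ) < 2 * |t| * (c/3)) hlow
      refine le_trans this ?_
      have heq : (2 * |t| * (c/3)) = |t| * cK := by rw [hcK]; ring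
      rw [heq, Real.mul_rpow (le_of_lt htpos) (le_of_lt hcKpos)]
      have h18 : 18 / cK ^ ((1:ℝ)/3) ≤ K := le_max_right _ _
      calc 18 / (|t| ^ ((1:ℝ)/3) * cK ^ ((1:ℝ)/3))
          = (18 / cK ^ ((1:ℝ)/3)) / T := by rw [hT]; field_simp
        _ ≤ K / T := by gcongr
    · -- second-derivative regime
      have hlow : ∀ k ∈ Icc (aj j) u, 2 * |t| * (c/3) ≤ |φ2 k| := by
        intro k hk
        have hkU : k ∈ U true := hball (hsubball hk)
        simp only [hU, if_true, Set.mem_setOf_eq] at hkU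
        have : |φ2 k| = 2 * |t| * |gf2 ω lam k| := by
          simp only [hφ2]
          rw [_root_.abs_mul, _root_.abs_neg, _root_.abs_mul, _root_.abs_two]
        rw [this]
        have := mul_le_mul_of_nonneg_left (le_of_lt hkU) (le_of_lt h2t)
        linarith [this]
      have := vdc2 hd1 hd2 hφ2c hu.1 (by positivity : (0:ℝ) < 2 * |t| * (c/3)) hlow
      refine le_trans this ?_
      have heq : (2 * |t| * (c/3)) = |t| * cK := by rw [hcK]; ring
      rw [heq, Real.sqrt_mul (abs_nonneg t)]
      have h8 : 8 / Real.sqrt cK ≤ K := le_max_left _ _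
      have hsqrtK : 0 < Real.sqrt cK := Real.sqrt_pos.mpr hcKpos
      have h13 : T ≤ Real.sqrt |t| := by
        rw [hT, Real.sqrt_eq_rpow]
        exact Real.rpow_le_rpow_of_exponent_le ht (by norm_num)
      calc 8 / (Real.sqrt |t| * Real.sqrt cK)
          ≤ 8 / (T * Real.sqrt cK) := by
            apply div_le_div_of_nonneg_left (by norm_num) (by positivity)
            exact mul_le_mul_of_nonneg_right h13 (le_of_lt hsqrtK)
        _ = (8 / Real.sqrt cK) / T := by field_simp
        _ ≤ K / T := by gcongr
  -- reduce to interval integrals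
  set D : ℝ := ∫ k in (-π:ℝ)..π, ‖deriv η k‖ with hD
  set Iη : ℝ := ∫ k in (-π:ℝ)..π, ‖η k‖ with hIη
  have hη'c : Continuous (deriv η) := hη.continuous_deriv le_rfl
  have hDnn : 0 ≤ D := intervalIntegral.integral_nonneg hππ (fun k _ => norm_nonneg _)
  have hIηnn : 0 ≤ Iη := intervalIntegral.integral_nonneg hππ (fun k _ => norm_nonneg _)
  set B : ℝ := (1/(2*π)) * Iη + D with hB
  have hBnn : 0 ≤ B := by
    rw [hB]; positivity
  have hKT : 0 ≤ K / T := le_of_lt (div_pos hKpos hTpos)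
  -- amplitude bound on each piece
  have hamp : ∀ j : ℕ, j < N →
      ‖∫ k in aj j..aj (j+1), Complex.exp (Complex.I * (φ k : ℂ)) * η k‖ ≤
        (K/T) * (B + ∫ k in aj j..aj (j+1), ‖deriv η k‖) := by
    intro j hj
    have h1 := osc_amplitude hφc hη (le_of_lt (hajmono j)) (hpiece j hj)
    refine le_trans h1 ?_
    apply mul_le_mul_of_nonneg_left ?_ hKT
    apply add_le_add_left
    have := eta_sup_bound hη (hajle (j+1) hj)
    rw [hB, hD, hIη]
    calc ‖η (aj (j+1))‖ ≤ (1/(2*π)) * (∫ s in (-π:ℝ)..π, ‖η s‖) + ∫ s in (-π:ℝ)..π, ‖deriv η s‖ :=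
          this
      _ = _ := by ring
  -- sum over the pieces
  have hintc : Continuous (fun k => Complex.exp (Complex.I * (φ k : ℂ)) * η k) :=
    ((Complex.continuous_exp.comp (continuous_const.mul
      (Complex.continuous_ofReal.comp hφc))).mul hη.continuous)
  have hsum : ∫ k in (-π:ℝ)..π, Complex.exp (Complex.I * (φ k : ℂ)) * η k =
      ∑ j ∈ Finset.range N, ∫ k in aj j..aj (j+1),
        Complex.exp (Complex.I * (φ k : ℂ)) * η k := by
    rw [← haj0, ← hajN]
    exact (intervalIntegral.sum_integral_adjacent_intervals
      (fun j _ => hintc.intervalIntegrable _ _)).symm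
  have hsumD : ∑ j ∈ Finset.range N, (∫ k in aj j..aj (j+1), ‖deriv η k‖) = D := by
    rw [hD, ← haj0, ← hajN]
    exact intervalIntegral.sum_integral_adjacent_intervals
      (fun j _ => (hη'c.norm.intervalIntegrable _ _))
  -- total bound
  have htotal : ‖∫ k in (-π:ℝ)..π, Complex.exp (Complex.I * (φ k : ℂ)) * η k‖ ≤
      (K/T) * ((N:ℝ)*B + D) := by
    rw [hsum]
    calc ‖∑ j ∈ Finset.range N, ∫ k in aj j..aj (j+1),
          Complex.exp (Complex.I * (φ k : ℂ)) * η k‖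
        ≤ ∑ j ∈ Finset.range N, ‖∫ k in aj j..aj (j+1),
          Complex.exp (Complex.I * (φ k : ℂ)) * η k‖ := norm_sum_le _ _
      _ ≤ ∑ j ∈ Finset.range N, (K/T) * (B + ∫ k in aj j..aj (j+1), ‖deriv η k‖) := by
          apply Finset.sum_le_sum
          intro j hj
          exact hamp j (Finset.mem_range.mp hj)
      _ = (K/T) * ((N:ℝ)*B + D) := by
          rw [← Finset.mul_sum, Finset.sum_add_distrib, Finset.sum_const, Finset.card_range,
            hsumD, nsmul_eq_mul]
  -- conclude
  have hgoal1 : ∫ k in Set.Ioc (-π) π,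
      Complex.exp (Complex.I * ((k * (x : ℝ) - 2 * t * γ k : ℝ) : ℂ)) * η k =
      ∫ k in (-π:ℝ)..π, Complex.exp (Complex.I * (φ k : ℂ)) * η k := by
    rw [intervalIntegral.integral_of_le hππ]
  have hgoal2 : (∫ k in Set.Ioc (-π) π, ‖deriv η k‖) = D := by
    rw [hD, intervalIntegral.integral_of_le hππ]
  have hgoal3 : (∫ k in Set.Ioc (-π) π, ‖η k‖) = Iη := by
    rw [hIη, intervalIntegral.integral_of_le hππ]
  rw [hgoal1, hgoal2, hgoal3]
  refine le_trans htotal ?_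
  have hfin : K * ((N:ℝ)*B + D) ≤ C * (D + Iη) := by
    rw [hC, hB]
    have hP : (0:ℝ) < 1/(2*π) := by positivity
    have hNn : (0:ℝ) ≤ (N:ℝ) := Nat.cast_nonneg N
    have hKnn : (0:ℝ) ≤ K := le_of_lt hKpos
    have hinner : (N:ℝ)*((1/(2*π)) * Iη + D) + D ≤ (((N:ℝ)+1) * (1/(2*π)+1)) * (D + Iη) := by
      nlinarith [mul_nonneg hP.le hDnn, mul_nonneg hP.le hIηnn,
        mul_nonneg (mul_nonneg hNn hP.le) hDnn, mul_nonneg hNn hDnn,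
        mul_nonneg hNn hIηnn, mul_nonneg (mul_nonneg hNn hP.le) hIηnn]
    calc K * ((N:ℝ)*((1/(2*π)) * Iη + D) + D)
        ≤ K * ((((N:ℝ)+1) * (1/(2*π)+1)) * (D + Iη)) :=
          mul_le_mul_of_nonneg_left hinner hKnn
      _ = K * ((N:ℝ)+1) * (1/(2*π)+1) * (D + Iη) := by ring
  calc (K/T) * ((N:ℝ)*B + D) = (K * ((N:ℝ)*B + D))/T := by ring
    _ ≤ (C * (D + Iη))/T := by
        gcongr
    _ = (C/T) * (D + Iη) := by ring
end
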